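/- arXiv:1508.07167 — 6 statements merged into one kernel-verified Lean document; each statement's English description precedes it below -/
import Mathlib

section
/- Let ω be a modulus of continuity with limsup_{δ→0+} ω(δ)/√δ = ∞. Then there exists a sequence δ_k > 0 (k = 1,2,…) such that ∑_{k=1}^∞ δ_k < 2π/6 and ∑_{k=1}^∞ (ω(δ_k))² = ∞. -/
open Real Filter

noncomputable section

/-- A modulus of continuity: a nondecreasing continuous function `ω : [0,∞) → [0,∞)`
with `ω 0 = 0` and `ω (x+y) ≤ ω x + ω y`. -/
def IsModulusOfContinuity (ω : ℝ → ℝ) : Prop :=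
  ContinuousOn ω (Set.Ici 0) ∧ MonotoneOn ω (Set.Ici 0) ∧ ω 0 = 0 ∧
    (∀ x : ℝ, 0 ≤ x → 0 ≤ ω x) ∧
    ∀ x y : ℝ, 0 ≤ x → 0 ≤ y → ω (x + y) ≤ ω x + ω y

set_option maxHeartbeats 1000000 in
/-- If `ω` is a modulus of continuity with `limsup_{δ→0+} ω(δ)/√δ = ∞`, then there is a
sequence `δ_k > 0` with `∑ δ_k < 2π/6` and `∑ (ω(δ_k))² = ∞`. -/
theorem exists_sequence_small_sum_divergent_omega_sq (ω : ℝ → ℝ)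
    (hω : IsModulusOfContinuity ω)
    (hlimsup : ∀ M : ℝ, ∃ᶠ δ in nhdsWithin 0 (Set.Ioi 0), M < ω δ / Real.sqrt δ) :
    ∃ δ : ℕ → ℝ, (∀ k, 0 < δ k) ∧ Summable δ ∧ (∑' k, δ k) < 2 * Real.pi / 6 ∧
      ¬ Summable (fun k => (ω (δ k)) ^ 2) := by
  obtain ⟨hcont, hmono, h0, hnonneg, hsub⟩ := hω
  -- eventually ω δ < 1 near 0 from the right
  have hev : ∀ᶠ δ in nhdsWithin 0 (Set.Ioi 0), ω δ < 1 := by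
    have h1 : ContinuousWithinAt ω (Set.Ici 0) 0 := hcont 0 Set.self_mem_Ici
    have h2 : Filter.Tendsto ω (nhdsWithin 0 (Set.Ici 0)) (nhds 0) := by
      simpa [h0] using h1.tendsto
    have h3 : ∀ᶠ δ in nhdsWithin 0 (Set.Ici 0), ω δ < 1 :=
      h2.eventually (gt_mem_nhds one_pos)
    exact h3.filter_mono (nhdsWithin_mono 0 Set.Ioi_subset_Ici_self)
  have hmem : ∀ᶠ δ in nhdsWithin 0 (Set.Ioi 0), δ ∈ Set.Ioi (0:ℝ) :=
    eventually_mem_nhdsWithin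
  -- choose d k
  have H : ∀ k : ℕ, ∃ x : ℝ, 0 < x ∧ ω x < 1 ∧ (2:ℝ)^(k+2) < ω x / Real.sqrt x := by
    intro k
    obtain ⟨x, hx1, hx2, hx3⟩ := ((hlimsup ((2:ℝ)^(k+2))).and_eventually
      (hmem.and hev)).exists
    exact ⟨x, hx2, hx3, hx1⟩
  choose d hdpos hd1 hdM using H
  have hωpos : ∀ k, 0 < ω (d k) := by
    intro k
    have hs : 0 < Real.sqrt (d k) := Real.sqrt_pos.mpr (hdpos k)
    have h : (0:ℝ) < ω (d k) / Real.sqrt (d k) :=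
      lt_trans (by positivity) (hdM k)
    exact (div_pos_iff.mp h).resolve_right (fun h' => absurd hs (not_lt.mpr h'.2.le)) |>.1
  have hωsqpos : ∀ k, (0:ℝ) < (ω (d k))^2 := fun k => pow_pos (hωpos k) 2
  -- key estimate: 16 * 2^k * d k ≤ ω (d k)^2
  have hkey : ∀ k, 16 * 2^k * d k ≤ (ω (d k))^2 := by
    intro k
    have hs : 0 < Real.sqrt (d k) := Real.sqrt_pos.mpr (hdpos k)
    have h1 : (2:ℝ)^(k+2) * Real.sqrt (d k) < ω (d k) :=
      (lt_div_iff₀ hs).mp (hdM k)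
    have h2 : ((2:ℝ)^(k+2) * Real.sqrt (d k))^2 ≤ (ω (d k))^2 :=
      pow_le_pow_left₀ (by positivity) h1.le 2
    have h3 : ((2:ℝ)^(k+2) * Real.sqrt (d k))^2 = (2:ℝ)^(2*k+4) * d k := by
      rw [mul_pow, Real.sq_sqrt (hdpos k).le, ← pow_mul]
      ring_nf
    have h4 : (16:ℝ) * 2^k ≤ (2:ℝ)^(2*k+4) := by
      have he : (16:ℝ) * 2^k = 2^(k+4) := by ring
      rw [he]
      exact pow_le_pow_right₀ one_le_two (by omega)
    calc 16 * 2^k * d k ≤ (2:ℝ)^(2*k+4) * d k :=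
          mul_le_mul_of_nonneg_right h4 (hdpos k).le
      _ = ((2:ℝ)^(k+2) * Real.sqrt (d k))^2 := h3.symm
      _ ≤ (ω (d k))^2 := h2
  -- block lengths
  set n : ℕ → ℕ := fun k => ⌈((ω (d k))^2)⁻¹⌉₊ with hn
  have hnlb : ∀ k, 1 ≤ (n k : ℝ) * (ω (d k))^2 := by
    intro k
    have h1 : ((ω (d k))^2)⁻¹ ≤ (n k : ℝ) := Nat.le_ceil _
    calc (1:ℝ) = ((ω (d k))^2)⁻¹ * (ω (d k))^2 :=
          (inv_mul_cancel₀ (hωsqpos k).ne').symm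
      _ ≤ (n k : ℝ) * (ω (d k))^2 := mul_le_mul_of_nonneg_right h1 (hωsqpos k).le
  have hnub : ∀ k, (n k : ℝ) * d k ≤ (1/8) * (1/2)^k := by
    intro k
    have hpos := hωsqpos k
    have h1 : (n k : ℝ) ≤ ((ω (d k))^2)⁻¹ + 1 :=
      (Nat.ceil_lt_add_one (by positivity)).le
    have hle1 : (ω (d k))^2 ≤ 1 := by nlinarith [(hd1 k).le, hωpos k]
    have h3 : (1:ℝ) ≤ ((ω (d k))^2)⁻¹ := by
      rw [le_inv_comm₀ one_pos hpos]; simpa using hle1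
    have h4 : (n k : ℝ) ≤ 2 * ((ω (d k))^2)⁻¹ := by linarith
    have h5 : d k ≤ (ω (d k))^2 / (16 * 2^k) := by
      rw [le_div_iff₀ (by positivity)]
      nlinarith [hkey k]
    have h6 : (2:ℝ) / (16 * 2^k) = (1/8) * (1/2)^k := by
      rw [div_pow, one_pow]
      field_simp
      ring
    calc (n k : ℝ) * d k ≤ (2 * ((ω (d k))^2)⁻¹) * ((ω (d k))^2 / (16 * 2^k)) :=
          mul_le_mul h4 h5 (hdpos k).le (by positivity)
      _ = 2 / (16 * 2^k) := by field_simp; exact div_self (hωpos k).ne'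
      _ = (1/8) * (1/2)^k := h6
  -- the doubly-indexed sequence
  set g : ℕ × ℕ → ℝ := fun p => if p.2 < n p.1 then d p.1 else (1/16) * (1/2)^(p.1 + p.2)
    with hg
  have hgpos : ∀ p, 0 < g p := by
    intro p
    by_cases h : p.2 < n p.1 <;> simp only [hg, h, if_true, if_false]
    · exact hdpos _
    · positivity
  -- majorant
  set h1f : ℕ × ℕ → ℝ := fun p => if p.2 < n p.1 then d p.1 else 0 with hh1
  set h2f : ℕ × ℕ → ℝ := fun p => (1/16) * ((1/2)^p.1 * (1/2)^p.2) with hh2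
  have hh1nonneg : (0:ℕ × ℕ → ℝ) ≤ h1f := by
    intro p
    by_cases h : p.2 < n p.1 <;> simp [hh1, h, (hdpos _).le]
  have hgle : ∀ p, g p ≤ h1f p + h2f p := by
    intro p
    by_cases h : p.2 < n p.1 <;>
      simp only [hg, hh1, hh2, h, if_true, if_false, pow_add]
    · nlinarith [pow_pos (by norm_num : (0:ℝ) < 1/2) p.1, pow_pos (by norm_num : (0:ℝ) < 1/2) p.2]
    · nlinarith [(hdpos p.1).le]
  have hgeom : Summable (fun k : ℕ => ((1:ℝ)/2)^k) :=
    summable_geometric_of_lt_one (by norm_num) (by norm_num)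
  have hsum1slice : ∀ k, Summable (fun j => h1f (k, j)) := by
    intro k
    apply summable_of_ne_finset_zero (s := Finset.range (n k))
    intro j hj
    simp only [Finset.mem_range, not_lt] at hj
    simp [hh1, Nat.not_lt.mpr hj]
  have htsum1slice : ∀ k, (∑' j, h1f (k, j)) = (n k : ℝ) * d k := by
    intro k
    rw [tsum_eq_sum (s := Finset.range (n k)) (by
      intro j hj
      simp only [Finset.mem_range, not_lt] at hj
      simp [hh1, Nat.not_lt.mpr hj])]
    have hcong : ∑ j ∈ Finset.range (n k), h1f (k, j)
        = ∑ _j ∈ Finset.range (n k), d k := by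
      apply Finset.sum_congr rfl
      intro j hj
      simp only [Finset.mem_range] at hj
      simp only [hh1, hj, if_true]
    rw [hcong, Finset.sum_const, Finset.card_range, nsmul_eq_mul]
  have hsum1 : Summable h1f := by
    rw [summable_prod_of_nonneg hh1nonneg]
    refine ⟨hsum1slice, ?_⟩
    apply Summable.of_nonneg_of_le (fun k => ?_) (fun k => ?_) (hgeom.mul_left (1/8))
    · rw [htsum1slice]; exact mul_nonneg (Nat.cast_nonneg _) (hdpos k).le
    · rw [htsum1slice]; exact hnub k
  have hsum2 : Summable h2f :=
    (hgeom.mul_of_nonneg hgeom (fun k => by positivity) (fun k => by positivity)).mul_left (1/16)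
  have hsumh : Summable (fun p => h1f p + h2f p) := hsum1.add hsum2
  have hsumg : Summable g :=
    Summable.of_nonneg_of_le (fun p => (hgpos p).le) hgle hsumh
  -- bound on the total sum
  have htsumgeom : (∑' k : ℕ, ((1:ℝ)/2)^k) = 2 := by
    rw [tsum_geometric_of_lt_one (by norm_num) (by norm_num)]; norm_num
  have htsumh1 : (∑' p, h1f p) ≤ 1/4 := by
    rw [Summable.tsum_prod' hsum1 hsum1slice]
    have hslicele : ∀ k : ℕ, (∑' j, h1f (k, j)) ≤ (1/8) * ((1:ℝ)/2)^k := by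
      intro k; rw [htsum1slice]; exact hnub k
    have hsl : Summable (fun k : ℕ => ∑' j, h1f (k, j)) :=
      ((summable_prod_of_nonneg hh1nonneg).mp hsum1).2
    calc (∑' k, ∑' j, h1f (k, j)) ≤ ∑' k, (1/8) * ((1:ℝ)/2)^k :=
          Summable.tsum_le_tsum hslicele hsl (hgeom.mul_left (1/8))
      _ = (1/8) * ∑' k, ((1:ℝ)/2)^k := tsum_mul_left
      _ = 1/4 := by rw [htsumgeom]; norm_num
  have hsum2slice : ∀ k : ℕ, Summable (fun j : ℕ => h2f (k, j)) := by
    intro k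
    simp only [hh2]
    exact (hgeom.mul_left ((1/2:ℝ)^k)).mul_left (1/16)
  have htsumh2 : (∑' p, h2f p) = 1/4 := by
    rw [Summable.tsum_prod' hsum2 hsum2slice]
    have hin : ∀ k : ℕ, (∑' j : ℕ, h2f (k, j)) = (1/16) * ((1:ℝ)/2)^k * 2 := by
      intro k
      simp only [hh2]
      rw [show (fun j : ℕ => 1/16 * ((1/2:ℝ)^k * (1/2)^j))
          = fun j : ℕ => (1/16 * (1/2:ℝ)^k) * (1/2)^j by funext j; ring]
      rw [tsum_mul_left, htsumgeom]
    rw [tsum_congr hin]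
    rw [show (fun k : ℕ => 1/16 * (1/2:ℝ)^k * 2) = fun k : ℕ => (1/8) * (1/2:ℝ)^k by
      funext k; ring]
    rw [tsum_mul_left, htsumgeom]
    norm_num
  have htsumg : (∑' p, g p) ≤ 1/2 := by
    calc (∑' p, g p) ≤ ∑' p, (h1f p + h2f p) :=
          Summable.tsum_le_tsum hgle hsumg hsumh
      _ = (∑' p, h1f p) + ∑' p, h2f p := Summable.tsum_add hsum1 hsum2
      _ ≤ 1/4 + 1/4 := by rw [htsumh2]; linarith [htsumh1]
      _ = 1/2 := by norm_num
  -- flatten via an equivalence ℕ ≃ ℕ × ℕ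
  obtain ⟨e⟩ : Nonempty (ℕ ≃ ℕ × ℕ) := ⟨(Denumerable.eqv (ℕ × ℕ)).symm⟩
  refine ⟨fun i => g (e i), fun i => hgpos (e i), (Equiv.summable_iff e).mpr hsumg, ?_, ?_⟩
  · have h1 : (∑' i, g (e i)) = ∑' p, g p := e.tsum_eq g
    have hpi : (1:ℝ) < 2 * Real.pi / 6 := by
      have := Real.pi_gt_three
      linarith
    rw [h1]
    linarith [htsumg]
  · intro hs
    have hF : Summable (fun p : ℕ × ℕ => (ω (g p))^2) := by
      rw [← Equiv.summable_iff e]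
      exact hs
    have hub : ∀ K : ℕ, (K : ℝ) ≤ ∑' p, (ω (g p))^2 := by
      intro K
      classical
      set S : Finset (ℕ × ℕ) :=
        (Finset.range K).biUnion (fun k => {k} ×ˢ Finset.range (n k)) with hS
      have hdisj : ∀ k1 ∈ Finset.range K, ∀ k2 ∈ Finset.range K, k1 ≠ k2 →
          Disjoint ({k1} ×ˢ Finset.range (n k1)) ({k2} ×ˢ Finset.range (n k2)) := by
        intro k1 _ k2 _ hne
        rw [Finset.disjoint_left]
        rintro ⟨a, b⟩ h1 h2
        simp only [Finset.mem_product, Finset.mem_singleton] at h1 h2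
        exact hne (h1.1 ▸ h2.1 ▸ rfl)
      have hsumS : (K:ℝ) ≤ ∑ p ∈ S, (ω (g p))^2 := by
        rw [hS, Finset.sum_biUnion hdisj]
        have hblock : ∀ k ∈ Finset.range K,
            (1:ℝ) ≤ ∑ p ∈ ({k} ×ˢ Finset.range (n k)), (ω (g p))^2 := by
          intro k _
          rw [Finset.sum_product, Finset.sum_singleton]
          have heq : ∀ j ∈ Finset.range (n k), (ω (g (k, j)))^2 = (ω (d k))^2 := by
            intro j hj
            simp only [Finset.mem_range] at hj
            simp [hg, hj]
          rw [Finset.sum_congr rfl heq, Finset.sum_const, Finset.card_range, nsmul_eq_mul]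
          exact hnlb k
        calc (K:ℝ) = ∑ _k ∈ Finset.range K, (1:ℝ) := by
              rw [Finset.sum_const, Finset.card_range, nsmul_eq_mul]; ring
          _ ≤ _ := Finset.sum_le_sum hblock
      exact le_trans hsumS (Summable.sum_le_tsum S (fun p _ => sq_nonneg _) hF)
    obtain ⟨K, hK⟩ := exists_nat_gt (∑' p, (ω (g p))^2)
    exact absurd (hub K) (not_le.mpr hK)
end
end

section
/- Let ω be a modulus of continuity, let δ_k > 0 satisfy ∑_{k=1}^∞ δ_k < 2π/6, and let u and v be the associated sum-of-triangles functions. Then u and v belong to Lip_ω(𝕋): there is a constant C > 0 such that |u(t₁)-u(t₂)| ≤ C·ω(|t₁-t₂|) and |v(t₁)-v(t₂)| ≤ C·ω(|t₁-t₂|) for all t₁,t₂. -/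
open Real Filter

noncomputable section

/-- The triangle function `Δ_{[a,b]}`: zero outside `[a, b]`, equal to `1` at the center
`(a+b)/2`, and linear on each half of `[a, b]`. -/
def triangle (a b t : ℝ) : ℝ := max 0 (1 - |t - (a + b) / 2| / ((b - a) / 2))

namespace SumOfTrianglesAux

lemma triangle_nonneg (a b t : ℝ) : 0 ≤ triangle a b t := le_max_left _ _

lemma triangle_le_one {a b : ℝ} (hab : a < b) (t : ℝ) : triangle a b t ≤ 1 := by
  have hr : 0 < (b - a) / 2 := by linarith
  have h0 : 0 ≤ |t - (a + b) / 2| / ((b - a) / 2) := div_nonneg (abs_nonneg _) hr.le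
  exact max_le (by norm_num) (by linarith)

lemma triangle_eq_zero {a b t : ℝ} (hab : a < b) (ht : t ≤ a ∨ b ≤ t) :
    triangle a b t = 0 := by
  have hr : 0 < (b - a) / 2 := by linarith
  have habs : (b - a) / 2 ≤ |t - (a + b) / 2| := by
    rcases ht with h | h
    · rw [abs_sub_comm, le_abs]; left; linarith
    · rw [le_abs]; left; linarith
  have h1 : 1 ≤ |t - (a + b) / 2| / ((b - a) / 2) := by
    rw [le_div_iff₀ hr]; linarith
  exact max_eq_left (by linarith)

lemma triangle_pos_mem {a b t : ℝ} (hab : a < b) (ht : triangle a b t ≠ 0) :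
    a < t ∧ t < b := by
  by_contra h
  push_neg at h
  rcases le_or_gt t a with h1 | h1
  · exact ht (triangle_eq_zero hab (Or.inl h1))
  · exact ht (triangle_eq_zero hab (Or.inr (h h1)))

lemma triangle_lip {a b : ℝ} (hab : a < b) (t₁ t₂ : ℝ) :
    |triangle a b t₁ - triangle a b t₂| ≤ |t₁ - t₂| / ((b - a) / 2) := by
  have hr : 0 < (b - a) / 2 := by linarith
  set c := (a + b) / 2
  have h1 : |triangle a b t₁ - triangle a b t₂| ≤
      |(1 - |t₁ - c| / ((b - a) / 2)) - (1 - |t₂ - c| / ((b - a) / 2))| := by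
    unfold triangle
    rw [max_comm 0 _, max_comm 0 _]
    exact abs_max_sub_max_le_abs _ _ _
  have h2 : (1 - |t₁ - c| / ((b - a) / 2)) - (1 - |t₂ - c| / ((b - a) / 2))
      = (|t₂ - c| - |t₁ - c|) / ((b - a) / 2) := by ring
  rw [h2] at h1
  refine h1.trans ?_
  rw [abs_div, abs_of_pos hr]
  have key : abs (|t₂ - c| - |t₁ - c|) ≤ |t₁ - t₂| := by
    calc abs (|t₂ - c| - |t₁ - c|) ≤ abs ((t₂ - c) - (t₁ - c)) :=
          abs_abs_sub_abs_le_abs_sub _ _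
      _ = |t₁ - t₂| := by rw [abs_sub_comm]; ring_nf
  gcongr

lemma omega_nsmul {ω : ℝ → ℝ} (hω : IsModulusOfContinuity ω) {h : ℝ} (hh : 0 ≤ h) :
    ∀ n : ℕ, ω (n * h) ≤ n * ω h := by
  obtain ⟨-, hmono, h0, hpos, hsub⟩ := hω
  intro n
  induction n with
  | zero => simp [h0]
  | succ n ih =>
    have hnh : 0 ≤ (n : ℝ) * h := by positivity
    calc ω ((n + 1 : ℕ) * h) = ω ((n : ℝ) * h + h) := by push_cast; ring_nf
      _ ≤ ω ((n : ℝ) * h) + ω h := hsub _ _ hnh hh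
      _ ≤ (n : ℝ) * ω h + ω h := by linarith
      _ = ((n + 1 : ℕ) : ℝ) * ω h := by push_cast; ring

lemma omega_scale {ω : ℝ → ℝ} (hω : IsModulusOfContinuity ω) {h d : ℝ}
    (hh : 0 < h) (hle : h ≤ d) : ω d * (h / d) ≤ 2 * ω h := by
  have hmono := hω.2.1
  have hpos := hω.2.2.2.1
  have hd : 0 < d := hh.trans_le hle
  set n := ⌈d / h⌉₊ with hn
  have h1 : d ≤ (n : ℝ) * h := by
    have := Nat.le_ceil (d / h)
    calc d = (d / h) * h := by field_simp
      _ ≤ (n : ℝ) * h := by gcongr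
  have h2 : (n : ℝ) ≤ d / h + 1 := (Nat.ceil_lt_add_one (by positivity)).le
  have h3 : ω d ≤ (n : ℝ) * ω h := by
    have hm : ω d ≤ ω ((n : ℝ) * h) :=
      hmono (Set.mem_Ici.mpr hd.le) (Set.mem_Ici.mpr (by positivity)) h1
    exact hm.trans (omega_nsmul hω hh.le n)
  have hωh : 0 ≤ ω h := hpos h hh.le
  have h4 : ω d ≤ (d / h + 1) * ω h := h3.trans (by gcongr)
  have h5 : (1 : ℝ) ≤ d / h := (one_le_div hh).mpr hle
  have h6 : ω d ≤ 2 * (d / h) * ω h := h4.trans (by nlinarith)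
  have h7 : ω d * (h / d) ≤ (2 * (d / h) * ω h) * (h / d) := by
    apply mul_le_mul_of_nonneg_right h6 (by positivity)
  refine h7.trans (le_of_eq ?_)
  field_simp

lemma term_bound {ω : ℝ → ℝ} (hω : IsModulusOfContinuity ω) {d c aa : ℝ}
    (hd : 0 < d) (hc : 2 ≤ c) (t₁ t₂ : ℝ) :
    |ω d * triangle aa (aa + c * d) t₁ - ω d * triangle aa (aa + c * d) t₂|
      ≤ 2 * ω |t₁ - t₂| := by
  have hab : aa < aa + c * d := by nlinarith
  have hωd : 0 ≤ ω d := hω.2.2.2.1 d hd.le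
  have hωh : 0 ≤ ω |t₁ - t₂| := hω.2.2.2.1 _ (abs_nonneg _)
  rw [← mul_sub, abs_mul, abs_of_nonneg hωd]
  rcases eq_or_lt_of_le (abs_nonneg (t₁ - t₂)) with h0 | h0
  · have ht : t₁ = t₂ := by
      have := abs_eq_zero.mp h0.symm; linarith [sub_eq_zero.mp this]
    subst ht; simp [hω.2.2.1]
  rcases le_or_gt d |t₁ - t₂| with hcase | hcase
  · -- big distance: use sup bound
    have hΔ : |triangle aa (aa + c * d) t₁ - triangle aa (aa + c * d) t₂| ≤ 1 := by
      have b1 := triangle_nonneg aa (aa + c * d) t₁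
      have b2 := triangle_nonneg aa (aa + c * d) t₂
      have b3 := triangle_le_one hab t₁
      have b4 := triangle_le_one hab t₂
      rw [abs_le]; constructor <;> linarith
    have hm : ω d ≤ ω |t₁ - t₂| :=
      hω.2.1 (Set.mem_Ici.mpr hd.le) (Set.mem_Ici.mpr (abs_nonneg _)) hcase
    nlinarith [mul_le_mul_of_nonneg_left hΔ hωd]
  · -- small distance: use Lipschitz bound
    have hlip := triangle_lip hab t₁ t₂
    have hr : (aa + c * d - aa) / 2 = c * d / 2 := by ring
    rw [hr] at hlip
    have hd2 : d ≤ c * d / 2 := by nlinarith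
    have hlip2 : |triangle aa (aa + c * d) t₁ - triangle aa (aa + c * d) t₂|
        ≤ |t₁ - t₂| / d := hlip.trans (by gcongr)
    have h7 : ω d * |triangle aa (aa + c * d) t₁ - triangle aa (aa + c * d) t₂|
        ≤ ω d * (|t₁ - t₂| / d) := by gcongr
    exact h7.trans (omega_scale hω h0 hcase.le)

lemma support_unique {ω : ℝ → ℝ} {δ a : ℕ → ℝ} (hδ : ∀ k, 0 < δ k) {c : ℝ}
    (hc : 2 ≤ c) (hsep : ∀ k, a k + c * δ k < a (k + 1)) (t : ℝ) :
    ∃ k₀, ∀ k ≠ k₀, ω (δ k) * triangle (a k) (a k + c * δ k) t = 0 := by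
  set f : ℕ → ℝ := fun k => ω (δ k) * triangle (a k) (a k + c * δ k) t with hf
  have hab : ∀ k, a k < a k + c * δ k := fun k => by nlinarith [hδ k]
  have hmono : ∀ j k : ℕ, j < k → a j + c * δ j < a k := by
    intro j k hjk
    induction k with
    | zero => omega
    | succ n ih =>
      rcases Nat.lt_succ_iff_lt_or_eq.mp hjk with h | h
      · exact (ih h).trans ((hab n).trans (hsep n))
      · subst h; exact hsep j
  by_cases hex : ∃ k, f k ≠ 0
  · obtain ⟨k₀, hk₀⟩ := hex
    refine ⟨k₀, fun k hk => ?_⟩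
    by_contra hfk
    have m1 : a k₀ < t ∧ t < a k₀ + c * δ k₀ := by
      apply triangle_pos_mem (hab k₀)
      intro h; exact hk₀ (by simp only [hf]; rw [h, mul_zero])
    have m2 : a k < t ∧ t < a k + c * δ k := by
      apply triangle_pos_mem (hab k)
      intro h; exact hfk (by rw [h, mul_zero])
    rcases lt_or_gt_of_ne hk with h | h
    · have := hmono k k₀ h; linarith [m1.1, m2.2]
    · have := hmono k₀ k h; linarith [m1.2, m2.1]
  · push_neg at hex
    exact ⟨0, fun k _ => hex k⟩

lemma w_bound {ω : ℝ → ℝ} (hω : IsModulusOfContinuity ω) {δ a : ℕ → ℝ}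
    (hδ : ∀ k, 0 < δ k) {c : ℝ} (hc : 2 ≤ c)
    (hsep : ∀ k, a k + c * δ k < a (k + 1)) {w : ℝ → ℝ}
    (hw : ∀ t, w t = ∑' k, ω (δ k) * triangle (a k) (a k + c * δ k) t)
    (t₁ t₂ : ℝ) : |w t₁ - w t₂| ≤ 4 * ω |t₁ - t₂| := by
  set f : ℝ → ℕ → ℝ := fun t k => ω (δ k) * triangle (a k) (a k + c * δ k) t with hf
  obtain ⟨k₁, hk₁⟩ := support_unique (ω := ω) hδ hc hsep t₁
  obtain ⟨k₂, hk₂⟩ := support_unique (ω := ω) hδ hc hsep t₂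
  have hw₁ : w t₁ = f t₁ k₁ := by rw [hw]; exact tsum_eq_single k₁ hk₁
  have hw₂ : w t₂ = f t₂ k₂ := by rw [hw]; exact tsum_eq_single k₂ hk₂
  have hωh : 0 ≤ ω |t₁ - t₂| := hω.2.2.2.1 _ (abs_nonneg _)
  by_cases hkk : k₁ = k₂
  · rw [hw₁, hw₂, hkk]
    have := term_bound hω (hδ k₂) hc t₁ t₂ (aa := a k₂)
    simp only [hf]
    linarith
  · have h1 : f t₂ k₁ = 0 := hk₂ k₁ hkk
    have h2 : f t₁ k₂ = 0 := hk₁ k₂ (Ne.symm hkk)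
    have b1 := term_bound hω (hδ k₁) hc t₁ t₂ (aa := a k₁)
    have b2 := term_bound hω (hδ k₂) hc t₁ t₂ (aa := a k₂)
    have key : w t₁ - w t₂ = (f t₁ k₁ - f t₂ k₁) + (f t₁ k₂ - f t₂ k₂) := by
      rw [hw₁, hw₂, h1, h2]; ring
    rw [key]
    calc |(f t₁ k₁ - f t₂ k₁) + (f t₁ k₂ - f t₂ k₂)|
        ≤ |f t₁ k₁ - f t₂ k₁| + |f t₁ k₂ - f t₂ k₂| := abs_add_le _ _
      _ ≤ 2 * ω |t₁ - t₂| + 2 * ω |t₁ - t₂| := add_le_add b1 b2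
      _ = 4 * ω |t₁ - t₂| := by ring

end SumOfTrianglesAux

/-- Let `ω` be a modulus of continuity, `δ_k > 0` with `∑ δ_k < 2π/6`, and let `u`, `v` be the
associated sum-of-triangles functions built over disjoint intervals `I_k = [a_k, a_k + 6δ_k]`
inside `(0, 2π)` (with `J_k = [a_k, a_k + 3δ_k]` the left half of `I_k`). Then `u, v ∈ Lip_ω`:
there is a constant `C > 0` with `|u t₁ - u t₂| ≤ C ω(|t₁ - t₂|)` and
`|v t₁ - v t₂| ≤ C ω(|t₁ - t₂|)` for all `t₁, t₂ ∈ [0, 2π]`. -/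
theorem sum_of_triangles_mem_LipOmega (ω : ℝ → ℝ) (hω : IsModulusOfContinuity ω)
    (δ : ℕ → ℝ) (hδ : ∀ k, 0 < δ k) (hδsum : Summable δ)
    (hδlt : (∑' k, δ k) < 2 * Real.pi / 6)
    (a : ℕ → ℝ) (ha0 : ∀ k, 0 < a k) (ha : ∀ k, a k + 6 * δ k < a (k + 1))
    (ha2π : ∀ k, a k + 6 * δ k < 2 * Real.pi)
    (u v : ℝ → ℝ)
    (hu : ∀ t, u t = ∑' k, ω (δ k) * triangle (a k) (a k + 6 * δ k) t)
    (hv : ∀ t, v t = ∑' k, ω (δ k) * triangle (a k) (a k + 3 * δ k) t) :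
    ∃ C > 0, ∀ t₁ ∈ Set.Icc (0 : ℝ) (2 * Real.pi), ∀ t₂ ∈ Set.Icc (0 : ℝ) (2 * Real.pi),
      |u t₁ - u t₂| ≤ C * ω |t₁ - t₂| ∧ |v t₁ - v t₂| ≤ C * ω |t₁ - t₂| := by
  refine ⟨4, by norm_num, fun t₁ _ t₂ _ => ?_⟩
  constructor
  · exact SumOfTrianglesAux.w_bound hω hδ (by norm_num) ha hu t₁ t₂
  · have hsep : ∀ k, a k + 3 * δ k < a (k + 1) := fun k => by
      have := ha k; have := hδ k; linarith
    exact SumOfTrianglesAux.w_bound hω hδ (by norm_num) hsep hv t₁ t₂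
end
end

section
/- Let ω be a modulus of continuity, let δ_k > 0 satisfy ∑_{k=1}^∞ δ_k < 2π/6, and let u be the associated sum-of-triangles function. Then for every positive integer n the function u_n(t) = max{u(t), 1/n} has bounded variation on [0,2π]. -/
open Real Filter

noncomputable section

lemma triangle_le_one {a b : ℝ} (h : a < b) (t : ℝ) : triangle a b t ≤ 1 := by
  have : 0 ≤ |t - (a + b) / 2| / ((b - a) / 2) :=
    div_nonneg (abs_nonneg _) (by linarith)
  unfold triangle
  rw [max_le_iff]
  constructor <;> linarith

lemma mem_of_triangle_ne {a b t : ℝ} (h : a < b) (ht : triangle a b t ≠ 0) :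
    a < t ∧ t < b := by
  have hr : (0:ℝ) < (b - a) / 2 := by linarith
  have h1 : 0 < 1 - |t - (a + b) / 2| / ((b - a) / 2) := by
    by_contra hc
    push_neg at hc
    exact ht (max_eq_left (by linarith))
  have h2 : |t - (a + b) / 2| < (b - a) / 2 :=
    (div_lt_one hr).mp (by linarith)
  rw [abs_lt] at h2
  constructor <;> linarith

lemma triangle_lipschitz {a b : ℝ} (h : a < b) :
    LipschitzWith (2 / (b - a)).toNNReal (triangle a b) := by
  have hr : (0:ℝ) < (b - a) / 2 := by linarith
  apply LipschitzWith.of_dist_le_mul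
  intro s t
  have h2 : (0:ℝ) ≤ 2 / (b - a) := le_of_lt (div_pos two_pos (by linarith))
  simp only [Real.dist_eq, Real.coe_toNNReal _ h2]
  calc |triangle a b s - triangle a b t|
      = |max (1 - |s - (a + b) / 2| / ((b - a) / 2)) 0
          - max (1 - |t - (a + b) / 2| / ((b - a) / 2)) 0| := by
        unfold triangle; rw [max_comm 0, max_comm 0]
    _ ≤ |(1 - |s - (a + b) / 2| / ((b - a) / 2)) - (1 - |t - (a + b) / 2| / ((b - a) / 2))| :=
        abs_max_sub_max_le_abs _ _ _
    _ = |(|t - (a + b) / 2|) - (|s - (a + b) / 2|)| / ((b - a) / 2) := by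
        rw [show (1 - |s - (a + b) / 2| / ((b - a) / 2)) - (1 - |t - (a + b) / 2| / ((b - a) / 2))
            = ((|t - (a + b) / 2|) - (|s - (a + b) / 2|)) / ((b - a) / 2) by ring,
          abs_div, abs_of_pos hr]
    _ ≤ |(t - (a + b) / 2) - (s - (a + b) / 2)| / ((b - a) / 2) := by
        exact div_le_div_of_nonneg_right (abs_abs_sub_abs_le_abs_sub _ _) hr.le
    _ = 2 / (b - a) * |s - t| := by
        rw [show (t - (a + b) / 2) - (s - (a + b) / 2) = -(s - t) by ring, abs_neg]
        field_simp

lemma lipschitz_const_mul {K : NNReal} {f : ℝ → ℝ} (hf : LipschitzWith K f) (c : ℝ) :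
    LipschitzWith (‖c‖₊ * K) (fun t => c * f t) := by
  apply LipschitzWith.of_dist_le_mul
  intro s t
  simp only [Real.dist_eq, ← mul_sub, abs_mul, NNReal.coe_mul, coe_nnnorm, Real.norm_eq_abs,
    mul_assoc]
  exact mul_le_mul_of_nonneg_left (by simpa [Real.dist_eq] using hf.dist_le_mul s t) (abs_nonneg c)

lemma lipschitz_max_const {K : NNReal} {f : ℝ → ℝ} (hf : LipschitzWith K f) (c : ℝ) :
    LipschitzWith K (fun t => max (f t) c) := by
  apply LipschitzWith.of_dist_le_mul
  intro s t
  simp only [Real.dist_eq]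
  exact (abs_max_sub_max_le_abs _ _ _).trans (by simpa [Real.dist_eq] using hf.dist_le_mul s t)

lemma lipschitz_finset_sum {ι : Type*} (s : Finset ι) (f : ι → ℝ → ℝ) (K : ι → NNReal)
    (h : ∀ i ∈ s, LipschitzWith (K i) (f i)) :
    LipschitzWith (∑ i ∈ s, K i) (fun t => ∑ i ∈ s, f i t) := by
  classical
  induction s using Finset.induction_on with
  | empty => simpa using LipschitzWith.const (0:ℝ)
  | @insert i s' hx ih =>
    simp only [Finset.sum_insert hx]
    exact (h i (Finset.mem_insert_self _ _)).add
      (ih fun j hj => h j (Finset.mem_insert_of_mem hj))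

/-- Let `ω` be a modulus of continuity, `δ_k > 0` with `∑ δ_k < 2π/6`, and let `u` be the
associated sum-of-triangles function over disjoint intervals `I_k = [a_k, a_k + 6δ_k]` inside
`(0, 2π)`. Then for every positive integer `n` the function `u_n(t) = max{u(t), 1/n}` has
bounded variation on `[0, 2π]`. -/
theorem truncated_sum_of_triangles_boundedVariation (ω : ℝ → ℝ)
    (hω : IsModulusOfContinuity ω)
    (δ : ℕ → ℝ) (hδ : ∀ k, 0 < δ k) (hδsum : Summable δ)
    (hδlt : (∑' k, δ k) < 2 * Real.pi / 6)
    (a : ℕ → ℝ) (ha0 : ∀ k, 0 < a k) (ha : ∀ k, a k + 6 * δ k < a (k + 1))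
    (ha2π : ∀ k, a k + 6 * δ k < 2 * Real.pi)
    (u : ℝ → ℝ)
    (hu : ∀ t, u t = ∑' k, ω (δ k) * triangle (a k) (a k + 6 * δ k) t)
    (n : ℕ) (hn : 0 < n) :
    BoundedVariationOn (fun t => max (u t) (1 / (n : ℝ))) (Set.Icc 0 (2 * Real.pi)) := by
  obtain ⟨hcont, hmono, hω0, hωpos, hsub⟩ := hω
  have hab : ∀ k, a k < a k + 6 * δ k := fun k => by nlinarith [hδ k]
  -- ω (δ k) → 0
  have hδ0 : Tendsto δ atTop (nhds 0) := hδsum.tendsto_atTop_zero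
  have hωδ0 : Tendsto (fun k => ω (δ k)) atTop (nhds 0) := by
    have h1 : Tendsto δ atTop (nhdsWithin 0 (Set.Ici 0)) :=
      tendsto_nhdsWithin_iff.mpr ⟨hδ0, Eventually.of_forall fun k => (hδ k).le⟩
    have h2 := (hcont 0 (Set.mem_Ici.mpr le_rfl)).tendsto
    rw [hω0] at h2
    exact h2.comp h1
  have hnpos : (0:ℝ) < 1 / n := by positivity
  have hfin : {k : ℕ | ¬ ω (δ k) ≤ 1 / (n:ℝ)}.Finite := by
    apply eventually_cofinite.mp
    rw [Nat.cofinite_eq_atTop]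
    exact (hωδ0.eventually_lt_const hnpos).mono fun k h => h.le
  set F : Finset ℕ := hfin.toFinset with hF
  -- disjoint supports
  have hamono : StrictMono a := strictMono_nat_of_lt_succ fun k =>
    lt_trans (by nlinarith [hδ k]) (ha k)
  have hdisj : ∀ t : ℝ, ∀ j k : ℕ, j ≠ k → triangle (a j) (a j + 6 * δ j) t ≠ 0 →
      triangle (a k) (a k + 6 * δ k) t = 0 := by
    intro t j k hjk hj
    by_contra hk
    obtain ⟨hj1, hj2⟩ := mem_of_triangle_ne (hab j) hj
    obtain ⟨hk1, hk2⟩ := mem_of_triangle_ne (hab k) hk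
    rcases lt_or_gt_of_ne hjk with h | h
    · have h1 : a j + 6 * δ j < a (j+1) := ha j
      have h2 : a (j+1) ≤ a k := hamono.monotone h
      linarith
    · have h1 : a k + 6 * δ k < a (k+1) := ha k
      have h2 : a (k+1) ≤ a j := hamono.monotone h
      linarith
  -- pointwise identification with the finite truncation
  have key : ∀ t : ℝ, max (u t) (1 / (n:ℝ))
      = max (∑ k ∈ F, ω (δ k) * triangle (a k) (a k + 6 * δ k) t) (1 / (n:ℝ)) := by
    intro t
    by_cases hex : ∃ k, triangle (a k) (a k + 6 * δ k) t ≠ 0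
    · obtain ⟨k, hk⟩ := hex
      have hut : u t = ω (δ k) * triangle (a k) (a k + 6 * δ k) t := by
        rw [hu t]
        exact tsum_eq_single k fun j hj => by
          rw [hdisj t k j (fun h => hj h.symm) hk, mul_zero]
      by_cases hkF : k ∈ F
      · have hvt : ∑ j ∈ F, ω (δ j) * triangle (a j) (a j + 6 * δ j) t
            = ω (δ k) * triangle (a k) (a k + 6 * δ k) t :=
          Finset.sum_eq_single_of_mem k hkF fun j _ hj => by
            rw [hdisj t k j (fun h => hj h.symm) hk, mul_zero]
        rw [hut, hvt]
      · have hωk : ω (δ k) ≤ 1 / (n:ℝ) := by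
          have := (Set.Finite.mem_toFinset hfin).not.mp hkF
          simpa using this
        have hu1 : u t ≤ 1 / (n:ℝ) := by
          rw [hut]
          calc ω (δ k) * triangle (a k) (a k + 6 * δ k) t
              ≤ ω (δ k) * 1 :=
                mul_le_mul_of_nonneg_left (triangle_le_one (hab k) t) (hωpos _ (hδ k).le)
            _ = ω (δ k) := mul_one _
            _ ≤ 1 / (n:ℝ) := hωk
        have hvt : ∑ j ∈ F, ω (δ j) * triangle (a j) (a j + 6 * δ j) t = 0 :=
          Finset.sum_eq_zero fun j hj => by
            have hjk : j ≠ k := fun h => hkF (h ▸ hj)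
            rw [hdisj t k j (fun h => hjk h.symm) hk, mul_zero]
        rw [hvt, max_eq_right hu1, max_eq_right hnpos.le]
    · push_neg at hex
      have hut : u t = 0 := by
        rw [hu t]
        have : ∀ k, ω (δ k) * triangle (a k) (a k + 6 * δ k) t = 0 := fun k => by
          rw [hex k, mul_zero]
        simp [this]
      have hvt : ∑ j ∈ F, ω (δ j) * triangle (a j) (a j + 6 * δ j) t = 0 :=
        Finset.sum_eq_zero fun j _ => by rw [hex j, mul_zero]
      rw [hut, hvt]
  -- Lipschitz truncation has bounded variation
  set g : ℝ → ℝ :=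
    fun t => max (∑ k ∈ F, ω (δ k) * triangle (a k) (a k + 6 * δ k) t) (1 / (n:ℝ)) with hg
  have hglip : LipschitzWith
      (∑ k ∈ F, ‖ω (δ k)‖₊ * (2 / (a k + 6 * δ k - a k)).toNNReal) g :=
    lipschitz_max_const
      (lipschitz_finset_sum F _ _ fun k _ =>
        lipschitz_const_mul (triangle_lipschitz (hab k)) (ω (δ k))) _
  have hgbv : BoundedVariationOn g (Set.Icc 0 (2 * Real.pi)) := by
    have h := (hglip.lipschitzOnWith (s := Set.Icc 0 (2 * Real.pi))).locallyBoundedVariationOn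
      0 (2 * Real.pi) (Set.left_mem_Icc.mpr (by positivity)) (Set.right_mem_Icc.mpr (by positivity))
    simpa [Set.inter_self] using h
  have heq : Set.EqOn (fun t => max (u t) (1 / (n:ℝ))) g (Set.Icc 0 (2 * Real.pi)) :=
    fun t _ => key t
  unfold BoundedVariationOn at hgbv ⊢
  rwa [eVariationOn.eq_of_eqOn heq]
end
end

section
/- Let ω be a modulus of continuity, let δ_k > 0 satisfy ∑_{k=1}^∞ δ_k < 2π/6, and let u and v be the associated sum-of-triangles functions. Fix k, and let U_k : ℝ → ℝ be the nondecreasing continuous function with U_k(t) = 0 for t ≤ a_k, U_k(t) = u(t) for t ∈ J_k = [a_k, (a_k+b_k)/2], and U_k(t) = ω(δ_k) for t ≥ (a_k+b_k)/2; let μ_k be the Stieltjes (Lebesgue–Stieltjes) measure on ℝ induced by U_k. Then ∫_{[a_k+δ_k, a_k+2δ_k]} v dμ_k ≥ (2/9)(ω(δ_k))². -/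
open Real Filter MeasureTheory

noncomputable section

lemma triangle_zero_out {a b t : ℝ} (hab : a < b) (h : t ≤ a ∨ b ≤ t) : triangle a b t = 0 := by
  have hh : 0 < (b - a) / 2 := by linarith
  have habs : (b - a) / 2 ≤ |t - (a + b) / 2| := by
    rcases h with h | h
    · rw [abs_sub_comm, abs_of_nonneg (by linarith)]; linarith
    · rw [abs_of_nonneg (by linarith)]; linarith
  have h1 : 1 ≤ |t - (a + b) / 2| / ((b - a) / 2) := (one_le_div hh).mpr habs
  unfold triangle
  exact max_eq_left (by linarith)

lemma triangle_left {a b t : ℝ} (hab : a < b) (h1 : a ≤ t) (h2 : t ≤ (a + b) / 2) :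
    triangle a b t = (t - a) / ((b - a) / 2) := by
  have hh : 0 < (b - a) / 2 := by linarith
  unfold triangle
  rw [abs_sub_comm, abs_of_nonneg (by linarith)]
  rw [max_eq_right]
  · have key : (t - a) / ((b - a) / 2) + ((a + b) / 2 - t) / ((b - a) / 2) = 1 := by
      rw [← add_div, div_eq_one_iff_eq hh.ne']; ring
    linarith
  · have : ((a + b) / 2 - t) / ((b - a) / 2) ≤ 1 := by
      rw [div_le_one hh]; linarith
    linarith

lemma triangle_cont (a b : ℝ) : Continuous (triangle a b) := by
  unfold triangle
  exact continuous_const.max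
    (continuous_const.sub (((continuous_id.sub continuous_const).abs).div_const _))

/-- Let `ω` be a modulus of continuity, `δ_k > 0` with `∑ δ_k < 2π/6`, and let `u`, `v` be the
associated sum-of-triangles functions over disjoint intervals `I_k = [a_k, b_k]`,
`b_k = a_k + 6δ_k`, inside `(0, 2π)`, with left halves `J_k = [a_k, a_k + 3δ_k]`. Fix `k` and
let `U` be the nondecreasing continuous (Stieltjes) function with `U = 0` on `(-∞, a_k]`,
`U = u` on `J_k`, and `U = ω(δ_k)` on `[a_k + 3δ_k, ∞)`, inducing the Lebesgue–Stieltjes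
measure `U.measure`. Then `∫_{[a_k+δ_k, a_k+2δ_k]} v dU ≥ (2/9)(ω(δ_k))²`. -/
theorem integral_v_stieltjes_lower_bound (ω : ℝ → ℝ) (hω : IsModulusOfContinuity ω)
    (δ : ℕ → ℝ) (hδ : ∀ k, 0 < δ k) (hδsum : Summable δ)
    (hδlt : (∑' k, δ k) < 2 * Real.pi / 6)
    (a : ℕ → ℝ) (ha0 : ∀ k, 0 < a k) (ha : ∀ k, a k + 6 * δ k < a (k + 1))
    (ha2π : ∀ k, a k + 6 * δ k < 2 * Real.pi)
    (u v : ℝ → ℝ)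
    (hu : ∀ t, u t = ∑' k, ω (δ k) * triangle (a k) (a k + 6 * δ k) t)
    (hv : ∀ t, v t = ∑' k, ω (δ k) * triangle (a k) (a k + 3 * δ k) t)
    (k : ℕ) (U : StieltjesFunction ℝ) (hUc : Continuous U)
    (hU0 : ∀ t ≤ a k, U t = 0)
    (hUu : ∀ t ∈ Set.Icc (a k) (a k + 3 * δ k), U t = u t)
    (hU1 : ∀ t, a k + 3 * δ k ≤ t → U t = ω (δ k)) :
    2 / 9 * (ω (δ k)) ^ 2 ≤
      ∫ t in Set.Icc (a k + δ k) (a k + 2 * δ k), v t ∂U.measure := by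
  obtain ⟨hωc, hωm, hω0, hωpos, hωsub⟩ := hω
  have hd : 0 < δ k := hδ k
  have hc0 : 0 ≤ ω (δ k) := hωpos _ hd.le
  -- strict ordering of the intervals
  have haij : ∀ i j, i < j → a i + 6 * δ i < a j := by
    intro i j hij
    induction j with
    | zero => omega
    | succ n ih =>
      rcases Nat.lt_succ_iff_lt_or_eq.mp hij with h | h
      · have h1 := ih h
        have h2 := ha n
        have h3 := hδ n
        linarith
      · subst h; exact ha i
  -- terms other than k vanish on (a k, a k + 6 δ k)
  have hz6 : ∀ t, a k < t → t < a k + 6 * δ k → ∀ j, j ≠ k →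
      ω (δ j) * triangle (a j) (a j + 6 * δ j) t = 0 := by
    intro t ht1 ht2 j hj
    have hdj := hδ j
    rcases hj.lt_or_gt with h | h
    · rw [triangle_zero_out (by linarith) (Or.inr (by have := haij j k h; linarith))]; ring
    · rw [triangle_zero_out (by linarith) (Or.inl (by have := haij k j h; linarith))]; ring
  have hz3 : ∀ t, a k < t → t < a k + 6 * δ k → ∀ j, j ≠ k →
      ω (δ j) * triangle (a j) (a j + 3 * δ j) t = 0 := by
    intro t ht1 ht2 j hj
    have hdj := hδ j
    rcases hj.lt_or_gt with h | h
    · rw [triangle_zero_out (by linarith) (Or.inr (by have := haij j k h; linarith))]; ring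
    · rw [triangle_zero_out (by linarith) (Or.inl (by have := haij k j h; linarith))]; ring
  set t1 := a k + δ k with ht1def
  set t2 := a k + 2 * δ k with ht2def
  -- values of U
  have hUt1 : U t1 = ω (δ k) * (1 / 3) := by
    rw [hUu t1 ⟨by simp [ht1def]; linarith, by simp [ht1def]; linarith⟩, hu,
      tsum_eq_single k (fun j hj => hz6 t1 (by simp [ht1def]; linarith)
        (by simp [ht1def]; linarith) j hj),
      triangle_left (by linarith) (by simp [ht1def]; linarith) (by simp [ht1def]; linarith)]
    have : (t1 - a k) / ((a k + 6 * δ k - a k) / 2) = 1 / 3 := by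
      rw [ht1def]; field_simp; ring
    rw [this]
  have hUt2 : U t2 = ω (δ k) * (2 / 3) := by
    rw [hUu t2 ⟨by simp [ht2def]; linarith, by simp [ht2def]; linarith⟩, hu,
      tsum_eq_single k (fun j hj => hz6 t2 (by simp [ht2def]; linarith)
        (by simp [ht2def]; linarith) j hj),
      triangle_left (by linarith) (by simp [ht2def]; linarith) (by simp [ht2def]; linarith)]
    have : (t2 - a k) / ((a k + 6 * δ k - a k) / 2) = 2 / 3 := by
      rw [ht2def]; field_simp; ring
    rw [this]
  -- the measure of the interval
  have hmeas : U.measure (Set.Icc t1 t2) = ENNReal.ofReal (U t2 - Function.leftLim U t1) :=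
    U.measure_Icc t1 t2
  have hll : Function.leftLim U t1 ≤ U t1 := U.mono.leftLim_le le_rfl
  have hll0 : 0 ≤ Function.leftLim U t1 := by
    have : U (a k) ≤ Function.leftLim U t1 := U.mono.le_leftLim (by rw [ht1def]; linarith)
    rw [hU0 (a k) le_rfl] at this
    linarith
  have hmeasval : ω (δ k) * (1 / 3) ≤ (U.measure (Set.Icc t1 t2)).toReal := by
    rw [hmeas, ENNReal.toReal_ofReal (by linarith)]
    linarith
  have hmeasfin : U.measure (Set.Icc t1 t2) ≠ ⊤ := by
    rw [hmeas]; exact ENNReal.ofReal_ne_top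
  -- v equals a single triangle term on the interval
  have hveq : Set.EqOn v (fun t => ω (δ k) * triangle (a k) (a k + 3 * δ k) t)
      (Set.Icc t1 t2) := by
    intro t ht
    obtain ⟨h1, h2⟩ := ht
    rw [hv]
    exact tsum_eq_single k (fun j hj => hz3 t (by simp [ht1def] at h1; linarith)
      (by simp [ht2def] at h2; linarith) j hj)
  have hcont : Continuous (fun t => ω (δ k) * triangle (a k) (a k + 3 * δ k) t) :=
    continuous_const.mul (triangle_cont _ _)
  have hint : IntegrableOn (fun t => ω (δ k) * triangle (a k) (a k + 3 * δ k) t)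
      (Set.Icc t1 t2) U.measure :=
    hcont.continuousOn.integrableOn_compact isCompact_Icc
  have hintc : IntegrableOn (fun _ : ℝ => 2 / 3 * ω (δ k)) (Set.Icc t1 t2) U.measure :=
    integrableOn_const hmeasfin
  -- pointwise lower bound on the triangle
  have htri : ∀ t ∈ Set.Icc t1 t2, 2 / 3 * ω (δ k) ≤ ω (δ k) * triangle (a k) (a k + 3 * δ k) t := by
    intro t ht
    obtain ⟨h1, h2⟩ := ht
    simp only [ht1def] at h1
    simp only [ht2def] at h2
    have habs : |t - (a k + (a k + 3 * δ k)) / 2| ≤ δ k / 2 := by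
      rw [abs_le]; constructor <;> linarith
    have hden : (0:ℝ) < (a k + 3 * δ k - a k) / 2 := by linarith
    have hq : |t - (a k + (a k + 3 * δ k)) / 2| / ((a k + 3 * δ k - a k) / 2) ≤ 1 / 3 := by
      rw [div_le_iff₀ hden]
      have : (1:ℝ) / 3 * ((a k + 3 * δ k - a k) / 2) = δ k / 2 := by ring
      linarith
    have h23 : (2:ℝ) / 3 ≤ triangle (a k) (a k + 3 * δ k) t := by
      have := le_max_right (0:ℝ)
        (1 - |t - (a k + (a k + 3 * δ k)) / 2| / ((a k + 3 * δ k - a k) / 2))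
      unfold triangle
      linarith
    nlinarith
  calc 2 / 9 * (ω (δ k)) ^ 2
      ≤ (U.measure (Set.Icc t1 t2)).toReal * (2 / 3 * ω (δ k)) := by nlinarith
    _ = ∫ t in Set.Icc t1 t2, (2 / 3 * ω (δ k)) ∂U.measure := by
        rw [setIntegral_const, smul_eq_mul, Measure.real]
    _ ≤ ∫ t in Set.Icc t1 t2, ω (δ k) * triangle (a k) (a k + 3 * δ k) t ∂U.measure :=
        setIntegral_mono_on hintc hint measurableSet_Icc htri
    _ = ∫ t in Set.Icc t1 t2, v t ∂U.measure :=
        (setIntegral_congr_fun measurableSet_Icc hveq).symm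
end
end

section
/- If α > 1/2 and f : 𝕋 → ℂ satisfies the Lipschitz condition of order α (i.e. |f(t₁)−f(t₂)| ≤ C·d(t₁,t₂)^α for some constant C and all t₁,t₂ ∈ 𝕋), then f ∈ W_2^{1/2}(𝕋), i.e. ∑_{k∈ℤ} |f̂(k)|²|k| < ∞. -/
open Real MeasureTheory

noncomputable section

instance : Fact (0 < 2 * Real.pi) := ⟨by positivity⟩

open AddCircle

lemma norm_exp_mul_I_sub_one_sq (θ : ℝ) :
    ‖Complex.exp (θ * Complex.I) - 1‖ ^ 2 = 2 - 2 * Real.cos θ := by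
  have h : Complex.exp (θ * Complex.I) - 1
      = Complex.ofReal (Real.cos θ - 1) + Complex.ofReal (Real.sin θ) * Complex.I := by
    apply Complex.ext <;>
      simp [Complex.exp_ofReal_mul_I_re, Complex.exp_ofReal_mul_I_im, Complex.cos_ofReal_re, Complex.sin_ofReal_re]
  rw [h, Complex.sq_norm, Complex.normSq_add_mul_I]
  nlinarith [Real.sin_sq_add_cos_sq θ]

lemma cont_integrable {E : Type} [NormedAddCommGroup E]
    (g : AddCircle (2 * Real.pi) → E) (hg : Continuous g) :
    Integrable g (haarAddCircle (T := 2 * Real.pi)) :=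
  hg.integrable_of_hasCompactSupport (HasCompactSupport.of_compactSpace g)

lemma summable_sq_fourierCoeff (g : C(AddCircle (2 * Real.pi), ℂ)) :
    Summable (fun k : ℤ => ‖fourierCoeff (⇑g) k‖ ^ 2) := by
  have hm := lp.memℓp ((fourierBasis (T := 2 * Real.pi)).repr
    (ContinuousMap.toLp (E := ℂ) 2 haarAddCircle ℂ g))
  have hs := hm.summable (by norm_num)
  simp only [fourierBasis_repr, fourierCoeff_toLp, ENNReal.toReal_ofNat,
    Real.rpow_two] at hs
  exact hs

lemma tsum_sq_fourierCoeff_le (g : C(AddCircle (2 * Real.pi), ℂ)) (B : ℝ)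
    (hbd : ∀ t, ‖g t‖ ≤ B) :
    ∑' k : ℤ, ‖fourierCoeff (⇑g) k‖ ^ 2 ≤ B ^ 2 := by
  have hB : 0 ≤ B := le_trans (norm_nonneg _) (hbd 0)
  have h := tsum_sq_fourierCoeff (ContinuousMap.toLp (E := ℂ) 2 haarAddCircle ℂ g)
  simp_rw [fourierCoeff_toLp] at h
  rw [h]
  have hae : (ContinuousMap.toLp (E := ℂ) 2 haarAddCircle ℂ g : AddCircle (2 * Real.pi) → ℂ)
      =ᵐ[haarAddCircle] ⇑g := ContinuousMap.coeFn_toLp _ _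
  calc ∫ t, ‖(ContinuousMap.toLp (E := ℂ) 2 haarAddCircle ℂ g : AddCircle (2 * Real.pi) → ℂ) t‖ ^ 2
        ∂haarAddCircle
      = ∫ t, ‖g t‖ ^ 2 ∂haarAddCircle := by
        refine integral_congr_ae (hae.mono fun x hx => ?_)
        simp only [hx]
    _ ≤ ∫ _t, B ^ 2 ∂(haarAddCircle (T := 2 * Real.pi)) := by
        refine integral_mono ?_ (integrable_const _) fun t => ?_
        · exact (cont_integrable _ ((g.continuous.norm).pow 2))
        · exact pow_le_pow_left₀ (norm_nonneg _) (hbd t) 2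
    _ = B ^ 2 := by simp

lemma cont_integrable' {E : Type} [NormedAddCommGroup E]
    (g : AddCircle (2 * Real.pi) → E) (hg : Continuous g) :
    Integrable g haarAddCircle :=
  hg.integrable_of_hasCompactSupport (HasCompactSupport.of_compactSpace g)

lemma fourierCoeff_translate (f : AddCircle (2 * Real.pi) → ℂ)
    (c : AddCircle (2 * Real.pi)) (k : ℤ) :
    fourierCoeff (fun t => f (t + c)) k = fourier k c * fourierCoeff f k := by
  have key : ∀ s : AddCircle (2 * Real.pi),
      fourier (-k) (s - c) • f s = fourier k c • (fourier (-k) s • f s) := by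
    intro s
    have h1 : ((-k) • (s - c) : AddCircle (2 * Real.pi)) = (-k) • s + k • c := by
      rw [smul_sub, neg_smul k c, sub_neg_eq_add]
    rw [fourier_apply, fourier_apply, fourier_apply, h1, toCircle_add]
    push_cast
    rw [smul_smul, mul_comm]
  calc fourierCoeff (fun t => f (t + c)) k
      = ∫ t, fourier (-k) t • f (t + c) ∂haarAddCircle := rfl
    _ = ∫ t, (fun s => fourier (-k) (s - c) • f s) (t + c) ∂haarAddCircle := by
        congr 1; ext t; simp
    _ = ∫ s, fourier (-k) (s - c) • f s ∂haarAddCircle :=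
        integral_add_right_eq_self (fun s => fourier (-k) (s - c) • f s) c
    _ = ∫ s, fourier k c • (fourier (-k) s • f s) ∂haarAddCircle := by simp_rw [key]
    _ = fourier k c • fourierCoeff f k := integral_smul _ _
    _ = fourier k c * fourierCoeff f k := rfl

lemma fourierCoeff_sub' (u v : AddCircle (2 * Real.pi) → ℂ) (hu : Continuous u)
    (hv : Continuous v) (k : ℤ) :
    fourierCoeff (fun t => u t - v t) k = fourierCoeff u k - fourierCoeff v k := by
  have hiu : Integrable (fun t => fourier (-k) t • u t) haarAddCircle :=
    cont_integrable' _ (((fourier (-k)).continuous).smul hu)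
  have hiv : Integrable (fun t => fourier (-k) t • v t) haarAddCircle :=
    cont_integrable' _ (((fourier (-k)).continuous).smul hv)
  calc fourierCoeff (fun t => u t - v t) k
      = ∫ t, (fourier (-k) t • u t - fourier (-k) t • v t) ∂haarAddCircle := by
        refine integral_congr_ae (Filter.Eventually.of_forall fun t => ?_)
        simp [smul_sub, mul_sub]
    _ = _ := integral_sub hiu hiv

lemma arith_bound (α C : ℝ) (hα : 0 < α) (n : ℕ) :
    (2:ℝ) ^ n * (C * (Real.pi / 2 ^ (n + 1)) ^ α) ^ 2
      ≤ (C * Real.pi ^ α) ^ 2 * ((2:ℝ) ^ (1 - 2 * α)) ^ n := by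
  have h2 : (0:ℝ) < 2 := two_pos
  have e1 : ((2:ℝ) ^ (n+1)) = (2:ℝ) ^ ((n+1 : ℕ) : ℝ) := (Real.rpow_natCast 2 (n+1)).symm
  have e0 : ((2:ℝ) ^ n) = (2:ℝ) ^ ((n : ℕ) : ℝ) := (Real.rpow_natCast 2 n).symm
  have hp : (Real.pi / 2 ^ (n+1)) ^ α = Real.pi ^ α / ((2:ℝ) ^ (((n+1:ℕ)) : ℝ)) ^ α := by
    rw [← e1, Real.div_rpow Real.pi_pos.le (by positivity)]
  have hq : (((2:ℝ) ^ (((n+1:ℕ)) : ℝ)) ^ α) ^ 2 = (2:ℝ) ^ ((((n+1:ℕ)) : ℝ) * α * 2) := by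
    rw [← Real.rpow_natCast (((2:ℝ) ^ ((((n+1:ℕ)) : ℝ))) ^ α) 2, ← Real.rpow_mul h2.le,
      ← Real.rpow_mul h2.le]
    norm_num
  have lhs_eq : (2:ℝ) ^ n * (C * (Real.pi / 2 ^ (n + 1)) ^ α) ^ 2
      = (C * Real.pi ^ α) ^ 2 * (2:ℝ) ^ (((n:ℕ) : ℝ) - (((n+1:ℕ)) : ℝ) * α * 2) := by
    rw [hp, Real.rpow_sub h2, ← hq, e0]
    field_simp
  rw [lhs_eq]
  have hrn : ((2:ℝ) ^ (1 - 2 * α)) ^ n = (2:ℝ) ^ ((1 - 2*α) * ((n:ℕ) : ℝ)) := by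
    rw [Real.rpow_mul h2.le, Real.rpow_natCast]
  rw [hrn]
  refine mul_le_mul_of_nonneg_left ?_ (sq_nonneg _)
  refine Real.rpow_le_rpow_of_exponent_le one_le_two ?_
  push_cast
  nlinarith [hα]

lemma block_bound (α : ℝ) (hα : 0 < α) (f : AddCircle (2 * Real.pi) → ℂ)
    (hcont : Continuous f) (C : ℝ)
    (hf : ∀ t₁ t₂ : AddCircle (2 * Real.pi), ‖f t₁ - f t₂‖ ≤ C * dist t₁ t₂ ^ α)
    (n : ℕ) (s : Finset ℤ)
    (hs : ∀ k ∈ s, (2:ℝ) ^ n ≤ |(k:ℝ)| ∧ |(k:ℝ)| ≤ 2 ^ (n + 1)) :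
    ∑ k ∈ s, ‖fourierCoeff f k‖ ^ 2 * |(k:ℝ)|
      ≤ 2 ^ n * (C * (Real.pi / 2 ^ (n + 1)) ^ α) ^ 2 := by
  set h : ℝ := Real.pi / 2 ^ (n + 1) with hh
  have hh0 : 0 < h := by positivity
  have hhπ : h ≤ Real.pi := by
    rw [hh]
    exact div_le_self Real.pi_pos.le (one_le_pow₀ one_le_two)
  set c : AddCircle (2 * Real.pi) := ((h : ℝ) : AddCircle (2 * Real.pi)) with hc
  have hnorm : ‖c‖ = h := by
    have h1 : |h| ≤ |2 * Real.pi| / 2 := by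
      rw [abs_of_pos hh0, abs_of_pos (by positivity : (0:ℝ) < 2 * Real.pi)]
      linarith
    rw [hc, (AddCircle.norm_coe_eq_abs_iff (2 * Real.pi)
      (by positivity : (0:ℝ) < 2 * Real.pi).ne').mpr h1, abs_of_pos hh0]
  set g : AddCircle (2 * Real.pi) → ℂ := fun t => f (t + c) - f t with hg
  have hc1 : Continuous (fun t : AddCircle (2 * Real.pi) => f (t + c)) :=
    hcont.comp (continuous_add_right c)
  have hgc : Continuous g := hc1.sub hcont
  have hgbd : ∀ t, ‖g t‖ ≤ C * h ^ α := by
    intro t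
    calc ‖f (t + c) - f t‖ ≤ C * dist (t + c) t ^ α := hf _ _
      _ = C * h ^ α := by rw [dist_eq_norm, add_sub_cancel_left, hnorm]
  have coeffg : ∀ k, fourierCoeff g k = (fourier k c - 1) * fourierCoeff f k := by
    intro k
    rw [hg, fourierCoeff_sub' (fun t => f (t + c)) f hc1 hcont, fourierCoeff_translate]
    ring
  have hsum : Summable fun k : ℤ => ‖fourierCoeff g k‖ ^ 2 :=
    summable_sq_fourierCoeff ⟨g, hgc⟩
  have htsum : ∑' k : ℤ, ‖fourierCoeff g k‖ ^ 2 ≤ (C * h ^ α) ^ 2 :=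
    tsum_sq_fourierCoeff_le ⟨g, hgc⟩ _ hgbd
  have perk : ∀ k ∈ s, ‖fourierCoeff f k‖ ^ 2 * |(k:ℝ)|
      ≤ 2 ^ n * ‖fourierCoeff g k‖ ^ 2 := by
    intro k hk
    obtain ⟨hk1, hk2⟩ := hs k hk
    have hw : (2:ℝ) ≤ ‖fourier k c - 1‖ ^ 2 := by
      have hfc : (fourier k c : ℂ) = Complex.exp (((((k:ℝ) * h : ℝ)) : ℂ) * Complex.I) := by
        have hπ : (Real.pi : ℂ) ≠ 0 := Complex.ofReal_ne_zero.mpr Real.pi_ne_zero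
        rw [hc, fourier_coe_apply]
        congr 1
        push_cast
        field_simp
      rw [hfc, norm_exp_mul_I_sub_one_sq]
      have hcos : Real.cos ((k:ℝ) * h) ≤ 0 := by
        rw [← Real.cos_abs]
        apply Real.cos_nonpos_of_pi_div_two_le_of_le
        · rw [abs_mul, abs_of_pos hh0]
          have : (2:ℝ) ^ n * h = Real.pi / 2 := by
            rw [hh, pow_succ]
            field_simp
          calc Real.pi / 2 = 2 ^ n * h := this.symm
            _ ≤ |(k:ℝ)| * h := mul_le_mul_of_nonneg_right hk1 hh0.le
        · rw [abs_mul, abs_of_pos hh0]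
          have : (2:ℝ) ^ (n+1) * h = Real.pi := by
            rw [hh]; field_simp
          calc |(k:ℝ)| * h ≤ 2 ^ (n+1) * h := mul_le_mul_of_nonneg_right hk2 hh0.le
            _ = Real.pi := this
            _ ≤ Real.pi + Real.pi / 2 := by linarith [Real.pi_pos]
      linarith
    have hnormg : ‖fourierCoeff g k‖ ^ 2 = ‖fourier k c - 1‖ ^ 2 * ‖fourierCoeff f k‖ ^ 2 := by
      rw [coeffg k, norm_mul, mul_pow]
    calc ‖fourierCoeff f k‖ ^ 2 * |(k:ℝ)|
        ≤ ‖fourierCoeff f k‖ ^ 2 * 2 ^ (n+1) :=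
          mul_le_mul_of_nonneg_left hk2 (sq_nonneg _)
      _ = 2 ^ n * (2 * ‖fourierCoeff f k‖ ^ 2) := by rw [pow_succ]; ring
      _ ≤ 2 ^ n * (‖fourier k c - 1‖ ^ 2 * ‖fourierCoeff f k‖ ^ 2) := by
          refine mul_le_mul_of_nonneg_left ?_ (by positivity)
          exact mul_le_mul_of_nonneg_right hw (sq_nonneg _)
      _ = 2 ^ n * ‖fourierCoeff g k‖ ^ 2 := by rw [hnormg]
  calc ∑ k ∈ s, ‖fourierCoeff f k‖ ^ 2 * |(k:ℝ)|
      ≤ ∑ k ∈ s, 2 ^ n * ‖fourierCoeff g k‖ ^ 2 := Finset.sum_le_sum perk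
    _ = 2 ^ n * ∑ k ∈ s, ‖fourierCoeff g k‖ ^ 2 := by rw [Finset.mul_sum]
    _ ≤ 2 ^ n * ∑' k : ℤ, ‖fourierCoeff g k‖ ^ 2 := by
        refine mul_le_mul_of_nonneg_left ?_ (by positivity)
        exact Summable.sum_le_tsum s (fun _ _ => sq_nonneg _) hsum
    _ ≤ 2 ^ n * (C * h ^ α) ^ 2 :=
        mul_le_mul_of_nonneg_left htsum (by positivity)


/-- If `α > 1/2` and `f : 𝕋 → ℂ` satisfies the Lipschitz (Hölder) condition of order `α`,
then `f ∈ W_2^{1/2}(𝕋)`, i.e. `∑_{k∈ℤ} |f̂(k)|²|k| < ∞`. -/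
theorem lipAlpha_mem_W_half_of_half_lt (α : ℝ) (hα : 1 / 2 < α)
    (f : AddCircle (2 * Real.pi) → ℂ) (C : ℝ)
    (hf : ∀ t₁ t₂ : AddCircle (2 * Real.pi), ‖f t₁ - f t₂‖ ≤ C * dist t₁ t₂ ^ α) :
    Summable (fun k : ℤ => ‖fourierCoeff f k‖ ^ 2 * |(k : ℝ)|) := by
  classical
  have hα0 : 0 < α := by linarith
  set C' : ℝ := max C 0 with hC'def
  have hC' : 0 ≤ C' := le_max_right _ _
  have hf' : ∀ t₁ t₂ : AddCircle (2 * Real.pi), ‖f t₁ - f t₂‖ ≤ C' * dist t₁ t₂ ^ α := by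
    intro t₁ t₂
    exact le_trans (hf t₁ t₂)
      (mul_le_mul_of_nonneg_right (le_max_left _ _) (Real.rpow_nonneg dist_nonneg _))
  -- continuity of f
  have hcont : Continuous f := by
    rw [continuous_iff_continuousAt]
    intro t₀
    rw [ContinuousAt, tendsto_iff_norm_sub_tendsto_zero]
    have h1 : Filter.Tendsto (fun t => dist t t₀) (nhds t₀) (nhds 0) := by
      have := (continuous_id.dist (continuous_const (y := t₀))).tendsto t₀
      simpa using this
    have h2 : ContinuousAt (fun x : ℝ => x ^ α) 0 :=
      Real.continuousAt_rpow_const 0 α (Or.inr hα0.le)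
    have h3 := (h2.tendsto).comp h1
    rw [Real.zero_rpow hα0.ne'] at h3
    have h4 : Filter.Tendsto (fun t => C' * dist t t₀ ^ α) (nhds t₀) (nhds 0) := by
      simpa using h3.const_mul C'
    exact squeeze_zero (fun t => norm_nonneg _) (fun t => hf' t t₀) h4
  set r : ℝ := (2:ℝ) ^ (1 - 2 * α) with hrdef
  have hr0 : 0 ≤ r := Real.rpow_nonneg (by norm_num) _
  have hr1 : r < 1 := Real.rpow_lt_one_of_one_lt_of_neg one_lt_two (by linarith)
  set M : ℝ := (C' * Real.pi ^ α) ^ 2 with hMdef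
  have hgeo : Summable fun n : ℕ => M * r ^ n :=
    (summable_geometric_of_lt_one hr0 hr1).mul_left M
  refine summable_of_sum_le (c := ∑' n : ℕ, M * r ^ n) (fun k => by positivity) fun u => ?_
  set nf : ℤ → ℕ := fun k => Nat.log 2 k.natAbs with hnf
  set u' : Finset ℤ := u.filter (fun k => k ≠ 0) with hu'
  have h0 : ∑ k ∈ u, ‖fourierCoeff f k‖ ^ 2 * |(k:ℝ)|
      = ∑ k ∈ u', ‖fourierCoeff f k‖ ^ 2 * |(k:ℝ)| := by
    rw [hu']
    refine (Finset.sum_filter_of_ne fun k _ hk => ?_).symm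
    rintro rfl
    simp at hk
  have hfib : ∑ n ∈ u'.image nf, ∑ k ∈ u'.filter (fun k => nf k = n),
        ‖fourierCoeff f k‖ ^ 2 * |(k:ℝ)|
      = ∑ k ∈ u', ‖fourierCoeff f k‖ ^ 2 * |(k:ℝ)| :=
    Finset.sum_fiberwise_of_maps_to (fun k hk => Finset.mem_image_of_mem nf hk) _
  rw [h0, ← hfib]
  have hblockn : ∀ n ∈ u'.image nf,
      ∑ k ∈ u'.filter (fun k => nf k = n), ‖fourierCoeff f k‖ ^ 2 * |(k:ℝ)| ≤ M * r ^ n := by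
    intro n _
    have hs : ∀ k ∈ u'.filter (fun k => nf k = n),
        (2:ℝ) ^ n ≤ |(k:ℝ)| ∧ |(k:ℝ)| ≤ 2 ^ (n + 1) := by
      intro k hk
      rw [Finset.mem_filter] at hk
      obtain ⟨hku', hkn⟩ := hk
      rw [hu', Finset.mem_filter] at hku'
      have hk0 : k ≠ 0 := hku'.2
      have hna : k.natAbs ≠ 0 := Int.natAbs_ne_zero.mpr hk0
      have habs : |(k:ℝ)| = (k.natAbs : ℝ) := by
        rw [Nat.cast_natAbs]
        norm_num
      subst hkn
      simp only [hnf]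
      constructor
      · rw [habs]
        exact_mod_cast Nat.pow_log_le_self 2 hna
      · rw [habs]
        exact_mod_cast (Nat.lt_pow_succ_log_self (by norm_num : 1 < 2) k.natAbs).le
    calc ∑ k ∈ u'.filter (fun k => nf k = n), ‖fourierCoeff f k‖ ^ 2 * |(k:ℝ)|
        ≤ 2 ^ n * (C' * (Real.pi / 2 ^ (n + 1)) ^ α) ^ 2 :=
          block_bound α hα0 f hcont C' hf' n _ hs
      _ ≤ M * r ^ n := arith_bound α C' hα0 n
  calc ∑ n ∈ u'.image nf, ∑ k ∈ u'.filter (fun k => nf k = n),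
        ‖fourierCoeff f k‖ ^ 2 * |(k:ℝ)|
      ≤ ∑ n ∈ u'.image nf, M * r ^ n := Finset.sum_le_sum hblockn
    _ ≤ ∑' n : ℕ, M * r ^ n := Summable.sum_le_tsum _ (fun i _ => by positivity) hgeo
end
end

section
/- There exists an absolute constant c > 0 with the following property: if f : 𝕋 → ℂ belongs to W_2^{1/2}(𝕋) and g : 𝕋 → ℂ is a square-integrable function satisfying |g(t₁) − g(t₂)| ≤ |f(t₁) − f(t₂)| for all t₁, t₂ ∈ 𝕋, then g ∈ W_2^{1/2}(𝕋) and (∑_{k∈ℤ} |ĝ(k)|²|k|)^{1/2} ≤ c·(∑_{k∈ℤ} |f̂(k)|²|k|)^{1/2}. -/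
open Real MeasureTheory AddCircle
open scoped ENNReal NNReal

noncomputable section

namespace ContractionWHalf

abbrev T : ℝ := 2 * Real.pi
abbrev 𝕋 := AddCircle T
abbrev μ : Measure 𝕋 := haarAddCircle

lemma fc_congr (f g : 𝕋 → ℂ) (h : f =ᵐ[μ] g) (n : ℤ) : fourierCoeff f n = fourierCoeff g n := by
  unfold fourierCoeff
  exact integral_congr_ae (h.mono fun x hx => by simp only [hx])

lemma int_smul (f : 𝕋 → ℂ) (hf : Integrable f μ) (n : ℤ) :
    Integrable (fun t => fourier n t • f t) μ := by
  simpa [smul_eq_mul] using hf.bdd_mul ((map_continuous (fourier n)).aestronglyMeasurable)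
    (Filter.Eventually.of_forall fun x => le_of_eq (Circle.norm_coe _))

lemma fc_sub (f g : 𝕋 → ℂ) (hf : Integrable f μ) (hg : Integrable g μ) (n : ℤ) :
    fourierCoeff (f - g) n = fourierCoeff f n - fourierCoeff g n := by
  unfold fourierCoeff
  rw [← integral_sub (int_smul f hf (-n)) (int_smul g hg (-n))]
  exact integral_congr_ae (Filter.Eventually.of_forall fun x => by exact mul_sub _ _ _)

lemma parseval (u : 𝕋 → ℂ) (hu : MemLp u 2 μ) :
    ∑' i : ℤ, ‖fourierCoeff u i‖ ^ 2 = ∫ t, ‖u t‖ ^ 2 ∂μ := by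
  have he : (hu.toLp u : 𝕋 → ℂ) =ᵐ[μ] u := hu.coeFn_toLp
  have h1 := tsum_sq_fourierCoeff (hu.toLp u)
  have h2 : ∀ i, fourierCoeff (hu.toLp u : 𝕋 → ℂ) i = fourierCoeff u i :=
    fun i => fc_congr _ _ he i
  simp_rw [h2] at h1
  rw [h1]
  exact integral_congr_ae (he.mono fun x hx => by simp only [hx])

lemma fourier_arg_add (n : ℤ) (x y : 𝕋) : fourier n (x + y) = fourier n x * fourier n y := by
  simp [fourier_apply, zsmul_add, toCircle_add]

lemma fourier_neg_arg (n : ℤ) (x : 𝕋) : fourier n (-x) = fourier (-n) x := by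
  simp [fourier_apply, neg_zsmul, zsmul_neg]

lemma fc_shift (u : 𝕋 → ℂ) (h : 𝕋) (n : ℤ) :
    fourierCoeff (fun t => u (t + h)) n = fourier n h * fourierCoeff u n := by
  unfold fourierCoeff
  have key := integral_add_right_eq_self (μ := μ) (fun s => fourier (-n) (s - h) • u s) h
  simp_rw [add_sub_cancel_right] at key
  simp only []
  rw [show (∫ (t : AddCircle T), (fourier (-n)) t • (fun t => u (t + h)) t ∂haarAddCircle)
      = ∫ (x : 𝕋), (fourier (-n)) (x - h) • u x ∂μ from key]
  rw [← integral_const_mul]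
  congr 1; funext s
  rw [sub_eq_add_neg, fourier_arg_add, fourier_neg_arg, neg_neg, smul_eq_mul, smul_eq_mul]
  ring

lemma sq_summable (u : 𝕋 → ℂ) (hu : MemLp u 2 μ) :
    Summable (fun k : ℤ => ‖fourierCoeff u k‖ ^ 2) := by
  have hm := lp.memℓp (fourierBasis.repr (hu.toLp u))
  rw [memℓp_gen_iff (by norm_num : (0:ℝ) < (2 : ℝ≥0∞).toReal)] at hm
  have : ∀ k : ℤ, fourierBasis.repr (hu.toLp u) k = fourierCoeff u k := by
    intro k
    rw [fourierBasis_repr]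
    exact fc_congr _ _ hu.coeFn_toLp k
  simp_rw [this] at hm
  convert hm using 2 with k
  rw [ENNReal.toReal_ofNat, Real.rpow_two]

lemma memLp_shift (u : 𝕋 → ℂ) (hu : MemLp u 2 μ) (h : 𝕋) :
    MemLp (fun t => u (t + h)) 2 μ :=
  hu.comp_measurePreserving (measurePreserving_add_right μ h)

lemma diff_parseval (u : 𝕋 → ℂ) (hu : MemLp u 2 μ) (h : 𝕋) :
    ∫ t, ‖u (t + h) - u t‖ ^ 2 ∂μ
      = ∑' k : ℤ, ‖(fourier k h : ℂ) - 1‖ ^ 2 * ‖fourierCoeff u k‖ ^ 2 := by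
  have hv : MemLp ((fun t => u (t + h)) - u) 2 μ := (memLp_shift u hu h).sub hu
  have hp := parseval _ hv
  have hfc : ∀ k : ℤ, fourierCoeff ((fun t => u (t + h)) - u) k
      = ((fourier k h : ℂ) - 1) * fourierCoeff u k := by
    intro k
    rw [fc_sub _ _ ((memLp_shift u hu h).integrable one_le_two) (hu.integrable one_le_two),
      fc_shift]
    ring
  simp_rw [hfc, norm_mul, mul_pow] at hp
  rw [show (∫ t, ‖u (t + h) - u t‖ ^ 2 ∂μ)
    = ∫ (t : 𝕋), ‖((fun t => u (t + h)) - u) t‖ ^ 2 ∂μ from rfl, ← hp]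

lemma diff_summable (u : 𝕋 → ℂ) (hu : MemLp u 2 μ) (h : 𝕋) :
    Summable (fun k : ℤ => ‖(fourier k h : ℂ) - 1‖ ^ 2 * ‖fourierCoeff u k‖ ^ 2) := by
  apply Summable.of_nonneg_of_le (fun k => by positivity)
    (fun k => ?_) ((sq_summable u hu).mul_left 4)
  have h1 : ‖(fourier k h : ℂ) - 1‖ ≤ 2 := by
    calc ‖(fourier k h : ℂ) - 1‖ ≤ ‖(fourier k h : ℂ)‖ + 1 := by
          simpa using norm_sub_le (fourier k h : ℂ) 1
    _ ≤ 2 := by rw [show ‖(fourier k h : ℂ)‖ = 1 from Circle.norm_coe _]; norm_num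
  have := mul_le_mul_of_nonneg_right (pow_le_pow_left₀ (norm_nonneg _) h1 2)
    (by positivity : (0:ℝ) ≤ ‖fourierCoeff u k‖ ^ 2)
  calc ‖(fourier k h : ℂ) - 1‖ ^ 2 * ‖fourierCoeff u k‖ ^ 2
      ≤ 2 ^ 2 * ‖fourierCoeff u k‖ ^ 2 := this
    _ = 4 * ‖fourierCoeff u k‖ ^ 2 := by norm_num

lemma lintegral_sq_eq (v : 𝕋 → ℂ) (hv : MemLp v 2 μ) :
    ∫⁻ t, (‖v t‖₊ : ℝ≥0∞) ^ 2 ∂μ = ENNReal.ofReal (∫ t, ‖v t‖ ^ 2 ∂μ) := by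
  have hint : Integrable (fun t => ‖v t‖ ^ 2) μ := by
    have := hv.integrable_norm_rpow (by norm_num) (by norm_num)
    simpa [ENNReal.toReal_ofNat, Real.rpow_two] using this
  rw [ofReal_integral_eq_lintegral_ofReal hint
    (Filter.Eventually.of_forall fun t => by positivity)]
  apply lintegral_congr fun t => ?_
  rw [ENNReal.ofReal_pow (norm_nonneg _), ofReal_norm, enorm_eq_nnnorm]

lemma diff_lintegral (u : 𝕋 → ℂ) (hu : MemLp u 2 μ) (h : 𝕋) :
    ∫⁻ t, (‖u (t + h) - u t‖₊ : ℝ≥0∞) ^ 2 ∂μ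
      = ∑' k : ℤ, (‖(fourier k h : ℂ) - 1‖₊ : ℝ≥0∞) ^ 2 * (‖fourierCoeff u k‖₊ : ℝ≥0∞) ^ 2 := by
  have hv : MemLp (fun t => u (t + h) - u t) 2 μ := (memLp_shift u hu h).sub hu
  rw [lintegral_sq_eq _ hv, diff_parseval u hu h,
    ENNReal.ofReal_tsum_of_nonneg (fun k => by positivity) (diff_summable u hu h)]
  congr 1; funext k
  rw [ENNReal.ofReal_mul (by positivity), ENNReal.ofReal_pow (norm_nonneg _),
    ENNReal.ofReal_pow (norm_nonneg _), ofReal_norm, enorm_eq_nnnorm, ofReal_norm, enorm_eq_nnnorm]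

lemma memLp_cont (φ : C(𝕋, ℂ)) : MemLp (⇑φ) 2 μ :=
  (Lp.memLp (ContinuousMap.toLp (E := ℂ) 2 μ ℂ φ)).ae_eq (ContinuousMap.coeFn_toLp μ φ)

lemma integrable_cont (φ : C(𝕋, ℂ)) : Integrable (⇑φ) μ :=
  (memLp_cont φ).integrable one_le_two

lemma fourier_pow (n : ℕ) (x : 𝕋) : (fourier (n : ℤ) x : ℂ) = (fourier 1 x : ℂ) ^ n := by
  induction n with
  | zero => simpa using fourier_zero
  | succ k ih =>
      push_cast
      rw [fourier_add, ih, pow_succ, mul_comm]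

/-- the Fejér-type finite sum -/
def Fn (n : ℕ) : 𝕋 → ℂ := fun x => ∑ j ∈ Finset.range n, fourier (j : ℤ) x

lemma continuous_Fn (n : ℕ) : Continuous (Fn n) := by
  apply continuous_finset_sum
  exact fun j _ => map_continuous (fourier (j : ℤ))

lemma geom_identity (n : ℕ) (x : 𝕋) :
    (fourier (n : ℤ) x : ℂ) - 1 = ((fourier 1 x : ℂ) - 1) * Fn n x := by
  rw [fourier_pow, Fn, mul_comm]
  simp_rw [fourier_pow]
  rw [geom_sum_mul]

lemma nnnorm_natAbs (k : ℤ) (x : 𝕋) :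
    ‖(fourier k x : ℂ) - 1‖₊ = ‖(fourier (k.natAbs : ℤ) x : ℂ) - 1‖₊ := by
  rcases Int.natAbs_eq k with h | h
  · rw [← h]
  · conv_lhs => rw [h]
    rw [fourier_neg]
    rw [show ((starRingEnd ℂ) (fourier (k.natAbs : ℤ) x) - 1)
        = (starRingEnd ℂ) ((fourier (k.natAbs : ℤ) x : ℂ) - 1) by rw [map_sub, map_one]]
    exact nnnorm_star _

lemma fc_fourier (j m : ℤ) : fourierCoeff (⇑(fourier j) : 𝕋 → ℂ) m = if m = j then 1 else 0 := by
  have h1 : fourierCoeff (⇑(fourier j) : 𝕋 → ℂ) m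
      = fourierBasis.repr (@fourierLp T _ 2 _ j) m := by
    rw [fourierBasis_repr]
    exact (fc_congr _ _ (coeFn_fourierLp 2 j) m).symm
  rw [h1, ← coe_fourierBasis, fourierBasis.repr_self]
  by_cases h : m = j
  · subst h; rw [lp.single_apply_self, if_pos rfl]
  · rw [lp.single_apply_ne _ _ _ h, if_neg h]

lemma fc_Fn (n : ℕ) (m : ℤ) :
    fourierCoeff (Fn n) m = ∑ j ∈ Finset.range n, (if m = (j : ℤ) then (1:ℂ) else 0) := by
  have : fourierCoeff (Fn n) m = ∑ j ∈ Finset.range n, fourierCoeff (⇑(fourier (j:ℤ)) : 𝕋 → ℂ) m := by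
    unfold fourierCoeff Fn
    rw [← integral_finset_sum]
    · apply integral_congr_ae
      filter_upwards with t
      rw [smul_eq_mul, Finset.mul_sum]
      simp [smul_eq_mul]
    · exact fun j _ => int_smul _ (integrable_cont (fourier (j:ℤ))) (-m)
  rw [this]
  exact Finset.sum_congr rfl fun j _ => fc_fourier (j:ℤ) m

lemma fc_Fn' (n : ℕ) (m : ℤ) :
    fourierCoeff (Fn n) m
      = if m ∈ (Finset.range n).image (Nat.cast : ℕ → ℤ) then (1:ℂ) else 0 := by
  rw [fc_Fn]
  rw [← Finset.sum_image (f := fun a => if m = a then (1:ℂ) else 0)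
    (fun x _ y _ h => Int.ofNat_inj.mp h)]
  exact Finset.sum_ite_eq ((Finset.range n).image (Nat.cast : ℕ → ℤ)) m (fun _ => (1:ℂ))

lemma tsum_Fn (n : ℕ) : ∑' m : ℤ, ‖fourierCoeff (Fn n) m‖ ^ 2 = n := by
  set s := (Finset.range n).image (Nat.cast : ℕ → ℤ) with hs
  have hval : ∀ m : ℤ, ‖fourierCoeff (Fn n) m‖ ^ 2 = if m ∈ s then (1:ℝ) else 0 := by
    intro m
    rw [fc_Fn']
    by_cases h : m ∈ s
    · rw [if_pos h, if_pos h]; simp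
    · rw [if_neg h, if_neg h]; simp
  simp_rw [hval]
  rw [tsum_eq_sum (s := s) (fun m hm => if_neg hm)]
  rw [Finset.sum_ite_mem, Finset.inter_self]
  rw [Finset.sum_const, hs, Finset.card_image_of_injective _ (fun x y h => Int.ofNat_inj.mp h),
    Finset.card_range]
  simp

lemma integral_Fn_sq (n : ℕ) : ∫⁻ h, (‖Fn n h‖₊ : ℝ≥0∞) ^ 2 ∂μ = (n : ℝ≥0∞) := by
  have hm : MemLp (Fn n) 2 μ := memLp_cont ⟨Fn n, continuous_Fn n⟩
  rw [lintegral_sq_eq _ hm, ← parseval _ hm, tsum_Fn]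
  simp

lemma sing_null : μ {(0 : 𝕋)} = 0 := by
  have hv : (volume : Measure 𝕋) {(0:𝕋)} = 0 := by
    have : ({(0:𝕋)} : Set 𝕋) = Metric.closedBall (0:𝕋) 0 := by
      rw [Metric.closedBall_zero]
    rw [this, AddCircle.volume_closedBall]
    have hmin : min T (2 * (0:ℝ)) = 0 := by
      rw [mul_zero]
      exact min_eq_right (by positivity)
    rw [hmin, ENNReal.ofReal_zero]
  rw [volume_eq_smul_haarAddCircle] at hv
  simp only [Measure.smul_apply, smul_eq_mul] at hv
  rcases mul_eq_zero.mp hv with h | h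
  · exact absurd h (by positivity)
  · exact h

lemma fourier_one_ne (x : 𝕋) (hx : x ≠ 0) : (fourier 1 x : ℂ) ≠ 1 := by
  rw [fourier_one]
  intro hc
  apply hx
  have h2 : toCircle x = toCircle (0 : 𝕋) := by
    ext
    rw [hc]
    have h3 : (fourier 1 (0:𝕋) : ℂ) = 1 := fourier_eval_zero 1
    rw [← fourier_one, h3]
  exact injective_toCircle (by positivity : (0:ℝ) < T).ne' h2

/-- the singular weight -/
def w : 𝕋 → ℝ≥0∞ := fun h => (((‖(fourier 1 h : ℂ) - 1‖₊ : ℝ≥0∞)) ^ 2)⁻¹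

lemma meas_w : Measurable w := by
  apply Measurable.inv
  apply Measurable.pow_const
  exact Measurable.coe_nnreal_ennreal (((map_continuous (fourier 1)).sub continuous_const).nnnorm.measurable)

lemma W_eq (k : ℤ) :
    ∫⁻ h, w h * (‖(fourier k h : ℂ) - 1‖₊ : ℝ≥0∞) ^ 2 ∂μ = (k.natAbs : ℝ≥0∞) := by
  set n := k.natAbs
  have hae : ∀ᵐ h ∂μ, w h * (‖(fourier k h : ℂ) - 1‖₊ : ℝ≥0∞) ^ 2
      = (‖Fn n h‖₊ : ℝ≥0∞) ^ 2 := by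
    have h0 : ∀ᵐ h ∂μ, h ≠ (0:𝕋) := by
      rw [Filter.eventually_iff, mem_ae_iff]
      simpa using sing_null
    filter_upwards [h0] with h hh
    have ha0 : (‖(fourier 1 h : ℂ) - 1‖₊ : ℝ≥0∞) ^ 2 ≠ 0 := by
      apply pow_ne_zero
      simpa [ENNReal.coe_eq_zero, nnnorm_eq_zero, sub_eq_zero] using fourier_one_ne h hh
    have hat : (‖(fourier 1 h : ℂ) - 1‖₊ : ℝ≥0∞) ^ 2 ≠ ⊤ :=
      ENNReal.pow_ne_top ENNReal.coe_ne_top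
    have hfact : (‖(fourier k h : ℂ) - 1‖₊ : ℝ≥0∞) ^ 2
        = (‖(fourier 1 h : ℂ) - 1‖₊ : ℝ≥0∞) ^ 2 * (‖Fn n h‖₊ : ℝ≥0∞) ^ 2 := by
      rw [nnnorm_natAbs k h]
      rw [show ((fourier (n:ℤ) h : ℂ) - 1) = ((fourier 1 h : ℂ) - 1) * Fn n h from
        geom_identity n h]
      rw [nnnorm_mul, ENNReal.coe_mul, mul_pow]
    rw [hfact, w, ← mul_assoc, ENNReal.inv_mul_cancel ha0 hat, one_mul]
  rw [lintegral_congr_ae hae, integral_Fn_sq]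

lemma meas_A (k : ℤ) : Measurable (fun h : 𝕋 => (‖(fourier k h : ℂ) - 1‖₊ : ℝ≥0∞) ^ 2) :=
  Measurable.pow_const (Measurable.coe_nnreal_ennreal
    (((map_continuous (fourier k)).sub continuous_const).nnnorm.measurable)) 2

lemma key_identity (u : 𝕋 → ℂ) (hu : MemLp u 2 μ) :
    ∫⁻ h, w h * ∫⁻ t, (‖u (t + h) - u t‖₊ : ℝ≥0∞) ^ 2 ∂μ ∂μ
      = ∑' k : ℤ, (‖fourierCoeff u k‖₊ : ℝ≥0∞) ^ 2 * (k.natAbs : ℝ≥0∞) := by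
  have h1 : ∀ h : 𝕋, w h * ∫⁻ t, (‖u (t + h) - u t‖₊ : ℝ≥0∞) ^ 2 ∂μ
      = ∑' k : ℤ, (w h * (‖(fourier k h : ℂ) - 1‖₊ : ℝ≥0∞) ^ 2)
          * (‖fourierCoeff u k‖₊ : ℝ≥0∞) ^ 2 := by
    intro h
    rw [diff_lintegral u hu h, ← ENNReal.tsum_mul_left]
    congr 1; funext k; ring
  simp_rw [h1]
  rw [lintegral_tsum (f := fun k h => w h * (‖(fourier k h : ℂ) - 1‖₊ : ℝ≥0∞) ^ 2 * (‖fourierCoeff u k‖₊ : ℝ≥0∞) ^ 2) (fun k => ((meas_w.mul (meas_A k)).mul_const _).aemeasurable)]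
  congr 1; funext k
  rw [lintegral_mul_const' _ _ (ENNReal.pow_ne_top ENNReal.coe_ne_top), W_eq k, mul_comm]

lemma lintegral_diff_congr (f F : 𝕋 → ℂ) (hfF : f =ᵐ[μ] F) (h : 𝕋) :
    ∫⁻ t, (‖f (t + h) - f t‖₊ : ℝ≥0∞) ^ 2 ∂μ
      = ∫⁻ t, (‖F (t + h) - F t‖₊ : ℝ≥0∞) ^ 2 ∂μ := by
  apply lintegral_congr_ae
  have h2 : (fun t : 𝕋 => f (t + h)) =ᵐ[μ] (fun t => F (t + h)) :=
    (measurePreserving_add_right μ h).quasiMeasurePreserving.ae_eq_comp hfF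
  filter_upwards [h2, hfF] with t ht1 ht2
  rw [show f (t + h) = F (t + h) from ht1, ht2]

lemma test_cont (d : 𝕋 → ℂ) (hd : Integrable d μ) (hfc : ∀ n, fourierCoeff d n = 0)
    (φ : C(𝕋, ℂ)) : ∫ t, φ t * d t ∂μ = 0 := by
  have hint : ∀ ψ : C(𝕋, ℂ), Integrable (fun t => ψ t * d t) μ := fun ψ =>
    hd.bdd_mul ψ.continuous.aestronglyMeasurable (Filter.Eventually.of_forall fun x => ψ.norm_coe_le_norm x)
  let L0 : C(𝕋, ℂ) →ₗ[ℂ] ℂ :=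
    { toFun := fun ψ => ∫ t, ψ t * d t ∂μ
      map_add' := fun ψ χ => by
        rw [← integral_add (hint ψ) (hint χ)]
        apply integral_congr_ae; filter_upwards with t
        show (ψ + χ) t * d t = _
        rw [ContinuousMap.add_apply, add_mul]
      map_smul' := fun c ψ => by
        simp only [RingHom.id_apply, smul_eq_mul]
        rw [← integral_const_mul]
        apply integral_congr_ae; filter_upwards with t
        show (c • ψ) t * d t = _
        rw [ContinuousMap.smul_apply, smul_eq_mul, mul_assoc] }
  have hbound : ∀ ψ : C(𝕋, ℂ), ‖L0 ψ‖ ≤ (∫ t, ‖d t‖ ∂μ) * ‖ψ‖ := by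
    intro ψ
    calc ‖∫ t, ψ t * d t ∂μ‖ ≤ ∫ t, ‖ψ t * d t‖ ∂μ := norm_integral_le_integral_norm _
    _ ≤ ∫ t, ‖ψ‖ * ‖d t‖ ∂μ := by
        apply integral_mono_of_nonneg (Filter.Eventually.of_forall fun t => norm_nonneg _)
          (hd.norm.const_mul _)
        filter_upwards with t
        rw [norm_mul]
        exact mul_le_mul_of_nonneg_right (ψ.norm_coe_le_norm t) (norm_nonneg _)
    _ = (∫ t, ‖d t‖ ∂μ) * ‖ψ‖ := by rw [integral_const_mul]; ring
  let L : C(𝕋, ℂ) →L[ℂ] ℂ := L0.mkContinuous _ hbound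
  have hspan : Submodule.span ℂ (Set.range (@fourier T)) ≤ LinearMap.ker (L : C(𝕋, ℂ) →ₗ[ℂ] ℂ) := by
    rw [Submodule.span_le]
    rintro ψ ⟨n, rfl⟩
    rw [SetLike.mem_coe, LinearMap.mem_ker]
    show ∫ t, fourier n t * d t ∂μ = 0
    have := hfc (-n)
    unfold fourierCoeff at this
    simpa [smul_eq_mul] using this
  have hclosed : IsClosed ((LinearMap.ker (L : C(𝕋, ℂ) →ₗ[ℂ] ℂ) : Submodule ℂ C(𝕋, ℂ)) : Set C(𝕋, ℂ)) :=
    ContinuousLinearMap.isClosed_ker L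
  have htop : (Submodule.span ℂ (Set.range (@fourier T))).topologicalClosure
      ≤ LinearMap.ker (L : C(𝕋, ℂ) →ₗ[ℂ] ℂ) := Submodule.topologicalClosure_minimal _ hspan hclosed
  rw [span_fourier_closure_eq_top] at htop
  have : φ ∈ LinearMap.ker (L : C(𝕋, ℂ) →ₗ[ℂ] ℂ) := htop Submodule.mem_top
  exact LinearMap.mem_ker.mp this

lemma closed_setIntegral (d : 𝕋 → ℂ) (hd : Integrable d μ) (hfc : ∀ n, fourierCoeff d n = 0)
    (C : Set 𝕋) (hC : IsClosed C) : ∫ t in C, d t ∂μ = 0 := by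
  set δ : ℕ → ℝ := fun n => (1 : ℝ) / (n + 1) with hδ
  have δpos : ∀ n, 0 < δ n := fun n => by positivity
  have δlim : Filter.Tendsto δ Filter.atTop (nhds 0) :=
    tendsto_one_div_add_atTop_nhds_zero_nat
  let φ : ℕ → BoundedContinuousFunction 𝕋 ℝ≥0 := fun n => thickenedIndicator (δpos n) C
  let ψ : ℕ → C(𝕋, ℂ) := fun n =>
    ⟨fun t => ((φ n t : ℝ) : ℂ), by
      exact Complex.continuous_ofReal.comp (NNReal.continuous_coe.comp (φ n).continuous)⟩
  have h0 : ∀ n, ∫ t, ψ n t * d t ∂μ = 0 := fun n => test_cont d hd hfc (ψ n)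
  have hlim : Filter.Tendsto (fun n => ∫ t, ψ n t * d t ∂μ) Filter.atTop
      (nhds (∫ t, Set.indicator C (fun _ => (1:ℂ)) t * d t ∂μ)) := by
    apply tendsto_integral_of_dominated_convergence (fun t => ‖d t‖)
    · exact fun n => (ψ n).continuous.aestronglyMeasurable.mul hd.1
    · exact hd.norm
    · intro n
      filter_upwards with t
      rw [norm_mul]
      have h1 : ‖(ψ n t : ℂ)‖ ≤ 1 := by
        show ‖(((φ n t : ℝ)) : ℂ)‖ ≤ 1
        rw [Complex.norm_real, Real.norm_eq_abs, abs_of_nonneg (φ n t).coe_nonneg]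
        exact_mod_cast thickenedIndicator_le_one (δpos n) C t
      exact mul_le_of_le_one_left (norm_nonneg _) h1
    · filter_upwards with t
      have ht := Filter.Tendsto.comp (tendsto_pi_nhds.mp
        (thickenedIndicator_tendsto_indicator_closure δpos δlim C) t) Filter.tendsto_id
      have hcont : Continuous (fun r : ℝ≥0 => ((r : ℝ) : ℂ) * d t) := by
        exact (Complex.continuous_ofReal.comp NNReal.continuous_coe).mul continuous_const
      have := (hcont.tendsto _).comp ht
      simp only [Function.comp_def] at this ⊢
      convert this using 2
      · rfl
      rw [hC.closure_eq]
      by_cases hmem : t ∈ C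
      · simp [Set.indicator_of_mem hmem]
      · simp [Set.indicator_of_notMem hmem]
  have hzero : ∫ t, Set.indicator C (fun _ => (1:ℂ)) t * d t ∂μ = 0 := by
    apply tendsto_nhds_unique hlim
    simpa [h0] using (tendsto_const_nhds : Filter.Tendsto (fun _ : ℕ => (0:ℂ)) _ _)
  rw [← integral_indicator hC.measurableSet]
  rw [← hzero]
  apply integral_congr_ae
  filter_upwards with t
  by_cases hmem : t ∈ C
  · simp [Set.indicator_of_mem hmem]
  · simp [Set.indicator_of_notMem hmem]

lemma fc_unique (d : 𝕋 → ℂ) (hd : Integrable d μ) (hfc : ∀ n, fourierCoeff d n = 0) :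
    d =ᵐ[μ] 0 :=
  ae_eq_zero_of_forall_setIntegral_isClosed_eq_zero hd (closed_setIntegral d hd hfc)

lemma exists_rep (f : 𝕋 → ℂ) (hf : Integrable f μ)
    (hsum : Summable (fun k : ℤ => ‖fourierCoeff f k‖ ^ 2)) :
    ∃ F : 𝕋 → ℂ, MemLp F 2 μ ∧ f =ᵐ[μ] F ∧ ∀ k, fourierCoeff F k = fourierCoeff f k := by
  have hmem : Memℓp (fun k : ℤ => fourierCoeff f k) 2 := by
    apply memℓp_gen
    simpa [ENNReal.toReal_ofNat, Real.rpow_two] using hsum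
  let a : lp (fun _ : ℤ => ℂ) 2 := ⟨_, hmem⟩
  let F0 : Lp ℂ 2 μ := fourierBasis.repr.symm a
  have hcoeff : ∀ k, fourierCoeff (F0 : 𝕋 → ℂ) k = fourierCoeff f k := by
    intro k
    rw [← fourierBasis_repr]
    show (fourierBasis.repr (fourierBasis.repr.symm a)) k = _
    rw [LinearIsometryEquiv.apply_symm_apply]
  have hint : Integrable (F0 : 𝕋 → ℂ) μ := (Lp.memLp F0).integrable one_le_two
  have hzero : (f - (F0 : 𝕋 → ℂ)) =ᵐ[μ] 0 := by
    apply fc_unique _ (hf.sub hint)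
    intro n
    rw [fc_sub _ _ hf hint, hcoeff, sub_self]
  refine ⟨F0, Lp.memLp F0, ?_, hcoeff⟩
  filter_upwards [hzero] with t ht
  have : f t - (F0 : 𝕋 → ℂ) t = 0 := ht
  linear_combination this

lemma summable_sq_of (c : ℤ → ℂ)
    (hA : Summable (fun k : ℤ => ‖c k‖ ^ 2 * |(k : ℝ)|)) :
    Summable (fun k : ℤ => ‖c k‖ ^ 2) := by
  have hι : Summable (fun k : ℤ => if k = 0 then ‖c 0‖ ^ 2 else 0) := by
    apply summable_of_ne_finset_zero (s := {(0:ℤ)})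
    intro k hk
    rw [if_neg (by simpa using hk)]
  apply Summable.of_nonneg_of_le (fun k => by positivity) (fun k => ?_) (hA.add hι)
  by_cases hk : k = 0
  · subst hk
    simp
  · have h1 : (1:ℝ) ≤ |(k : ℝ)| := by
      rw [← Int.cast_abs]
      exact_mod_cast Int.one_le_abs (by simpa using hk)
    have : ‖c k‖ ^ 2 ≤ ‖c k‖ ^ 2 * |(k : ℝ)| := le_mul_of_one_le_right (by positivity) h1
    calc ‖c k‖ ^ 2 ≤ ‖c k‖ ^ 2 * |(k : ℝ)| := this
    _ ≤ ‖c k‖ ^ 2 * |(k : ℝ)| + (if k = 0 then ‖c 0‖ ^ 2 else 0) := by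
        rw [if_neg hk]; simp

lemma memLp_vol (g : 𝕋 → ℂ) (h : MemLp g 2 volume) : MemLp g 2 μ := by
  have h2 := h.smul_measure (c := (ENNReal.ofReal T)⁻¹)
    (ENNReal.inv_ne_top.mpr (by simp [Real.pi_ne_zero]; positivity))
  rwa [show ((ENNReal.ofReal T)⁻¹ • (volume : Measure 𝕋)) = μ by
    rw [volume_eq_smul_haarAddCircle, smul_smul,
      ENNReal.inv_mul_cancel (by positivity) ENNReal.ofReal_ne_top, one_smul]] at h2

lemma integrable_vol (g : 𝕋 → ℂ) (h : Integrable g volume) : Integrable g μ := by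
  have h2 := h.smul_measure (c := (ENNReal.ofReal T)⁻¹)
    (ENNReal.inv_ne_top.mpr (by positivity))
  rwa [show ((ENNReal.ofReal T)⁻¹ • (volume : Measure 𝕋)) = μ by
    rw [volume_eq_smul_haarAddCircle, smul_smul,
      ENNReal.inv_mul_cancel (by positivity) ENNReal.ofReal_ne_top, one_smul]] at h2

lemma ofReal_term (c : ℂ) (k : ℤ) :
    (‖c‖₊ : ℝ≥0∞) ^ 2 * (k.natAbs : ℝ≥0∞) = ENNReal.ofReal (‖c‖ ^ 2 * |(k : ℝ)|) := by
  rw [ENNReal.ofReal_mul (by positivity), ENNReal.ofReal_pow (norm_nonneg _),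
    ofReal_norm, enorm_eq_nnnorm, show |(k:ℝ)| = ((k.natAbs : ℕ) : ℝ) by
      rw [Nat.cast_natAbs]; exact Int.cast_abs.symm, ENNReal.ofReal_natCast]

end ContractionWHalf

open ContractionWHalf

/-- There is an absolute constant `c > 0` such that: if `f : 𝕋 → ℂ` belongs to
`W_2^{1/2}(𝕋)` (it is integrable and `∑ |f̂(k)|²|k| < ∞`) and `g : 𝕋 → ℂ` is a
square-integrable function with `|g(t₁) − g(t₂)| ≤ |f(t₁) − f(t₂)|` for all `t₁, t₂`, then
`g ∈ W_2^{1/2}(𝕋)` and `(∑ |ĝ(k)|²|k|)^{1/2} ≤ c (∑ |f̂(k)|²|k|)^{1/2}`. -/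
theorem contraction_mem_W_half :
    ∃ c > (0 : ℝ), ∀ f g : AddCircle (2 * Real.pi) → ℂ,
      Integrable f volume →
      Summable (fun k : ℤ => ‖fourierCoeff f k‖ ^ 2 * |(k : ℝ)|) →
      MemLp g 2 volume →
      (∀ t₁ t₂ : AddCircle (2 * Real.pi), ‖g t₁ - g t₂‖ ≤ ‖f t₁ - f t₂‖) →
      Summable (fun k : ℤ => ‖fourierCoeff g k‖ ^ 2 * |(k : ℝ)|) ∧
        Real.sqrt (∑' k : ℤ, ‖fourierCoeff g k‖ ^ 2 * |(k : ℝ)|) ≤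
          c * Real.sqrt (∑' k : ℤ, ‖fourierCoeff f k‖ ^ 2 * |(k : ℝ)|) := by
  refine ⟨1, one_pos, fun f g hf_int hf_sum hg_mem hcontr => ?_⟩
  have hfμ : Integrable f μ := integrable_vol f hf_int
  have hgμ : MemLp g 2 μ := memLp_vol g hg_mem
  obtain ⟨F, hF2, hfF, hFc⟩ := exists_rep f hfμ (summable_sq_of _ hf_sum)
  have hkeyF := key_identity F hF2
  have hkeyg := key_identity g hgμ
  have hmono : ∫⁻ h, w h * ∫⁻ t, (‖g (t + h) - g t‖₊ : ℝ≥0∞) ^ 2 ∂μ ∂μ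
      ≤ ∫⁻ h, w h * ∫⁻ t, (‖F (t + h) - F t‖₊ : ℝ≥0∞) ^ 2 ∂μ ∂μ := by
    apply lintegral_mono fun h => ?_
    rw [← lintegral_diff_congr f F hfF h]
    apply mul_le_mul_right (lintegral_mono fun t => ?_)
    apply pow_le_pow_left' ?_ 2
    exact ENNReal.coe_le_coe.mpr (by exact_mod_cast hcontr (t + h) t)
  rw [hkeyg, hkeyF] at hmono
  simp_rw [hFc, ofReal_term] at hmono
  have hfs : (∑' k : ℤ, ENNReal.ofReal (‖fourierCoeff f k‖ ^ 2 * |(k : ℝ)|))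
      = ENNReal.ofReal (∑' k : ℤ, ‖fourierCoeff f k‖ ^ 2 * |(k : ℝ)|) :=
    (ENNReal.ofReal_tsum_of_nonneg (fun k => by positivity) hf_sum).symm
  have hne : (∑' k : ℤ, ENNReal.ofReal (‖fourierCoeff g k‖ ^ 2 * |(k : ℝ)|)) ≠ ⊤ :=
    ne_top_of_le_ne_top (by rw [hfs]; exact ENNReal.ofReal_ne_top) hmono
  have hgsum : Summable (fun k : ℤ => ‖fourierCoeff g k‖ ^ 2 * |(k : ℝ)|) := by
    have h2 := ENNReal.summable_toReal hne
    refine h2.congr fun k => ?_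
    rw [ENNReal.toReal_ofReal (by positivity)]
  refine ⟨hgsum, ?_⟩
  rw [one_mul]
  apply Real.sqrt_le_sqrt
  have hgs : (∑' k : ℤ, ENNReal.ofReal (‖fourierCoeff g k‖ ^ 2 * |(k : ℝ)|))
      = ENNReal.ofReal (∑' k : ℤ, ‖fourierCoeff g k‖ ^ 2 * |(k : ℝ)|) :=
    (ENNReal.ofReal_tsum_of_nonneg (fun k => by positivity) hgsum).symm
  rw [hgs, hfs] at hmono
  exact (ENNReal.ofReal_le_ofReal_iff (tsum_nonneg fun k => by positivity)).mp hmono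
end
end
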